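/- arXiv:1108.4848 — 7 statements merged into one kernel-verified Lean document; each statement's English description precedes it below -/
import Mathlib

section
/- Let (Ω, 𝒜, P) be a probability space, 𝒳 a measurable space, and X : Ω → 𝒳 a measurable map. Let δ : 𝒳 × [0,1] → ℝ be measurable with δ(x,η) ∈ {0,1} for all x, η. Suppose that for (law of X)-almost every x, the map η ↦ δ(x,η) is nondecreasing and right-continuous with δ(x,1) = 1, and that for every η ∈ [0,1], E[δ(X,η)] ≤ η. Then for every t ∈ [0,1], P(P_δ(X) ≤ t) ≤ t. If moreover E[δ(X,η)] = η for every η ∈ [0,1], then P(P_δ(X) ≤ t) = t for every t ∈ [0,1]. -/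
open Set MeasureTheory

/-- The p-value statistic of a decision process `δ`: the smallest size in `[0,1]` at which
the null hypothesis is rejected. -/
noncomputable def pvalue {𝒳 : Type*} (δ : 𝒳 → ℝ → ℝ) (x : 𝒳) : ℝ :=
  sInf {η : ℝ | η ∈ Icc (0:ℝ) 1 ∧ δ x η = 1}

lemma pvalue_le_iff_aux {𝒳 : Type*} (δ : 𝒳 → ℝ → ℝ) (x : 𝒳)
    (hvals : ∀ η ∈ Icc (0:ℝ) 1, δ x η = 0 ∨ δ x η = 1)
    (hmono : MonotoneOn (δ x) (Icc (0:ℝ) 1))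
    (hrc : ∀ η ∈ Ico (0:ℝ) 1, ContinuousWithinAt (δ x) (Ici η) η)
    (h1 : δ x 1 = 1) {t : ℝ} (ht : t ∈ Icc (0:ℝ) 1) :
    pvalue δ x ≤ t ↔ δ x t = 1 := by
  set S : Set ℝ := {η : ℝ | η ∈ Icc (0:ℝ) 1 ∧ δ x η = 1} with hS
  have h1S : (1:ℝ) ∈ S := ⟨⟨zero_le_one, le_refl 1⟩, h1⟩
  have hbdd : BddBelow S := ⟨0, fun η hη => hη.1.1⟩
  have key : ∀ η ∈ Icc (0:ℝ) 1, sInf S < η → δ x η = 1 := by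
    intro η hη hlt
    obtain ⟨s, hsS, hs⟩ := exists_lt_of_csInf_lt ⟨1, h1S⟩ hlt
    have hmle := hmono hsS.1 hη hs.le
    rw [hsS.2] at hmle
    rcases hvals η hη with h | h
    · linarith
    · exact h
  constructor
  · intro hle
    rcases lt_or_eq_of_le (hle : sInf S ≤ t) with h | h
    · exact key t ht h
    · rcases eq_or_lt_of_le ht.2 with h1' | h1'
      · rw [h1']; exact h1
      · have htIco : t ∈ Ico (0:ℝ) 1 := ⟨ht.1, h1'⟩
        have htend : Filter.Tendsto (δ x) (nhdsWithin t (Ioi t)) (nhds (δ x t)) :=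
          (hrc t htIco).mono_left (nhdsWithin_mono t Ioi_subset_Ici_self)
        have heq : ∀ᶠ η in nhdsWithin t (Ioi t), δ x η = 1 := by
          filter_upwards [Ioo_mem_nhdsGT_of_mem ⟨le_refl t, h1'⟩] with η hη
          exact key η ⟨le_trans ht.1 hη.1.le, hη.2.le⟩ (lt_of_le_of_lt (le_of_eq (h : sInf S = t)) hη.1)
        have htend1 : Filter.Tendsto (δ x) (nhdsWithin t (Ioi t)) (nhds 1) :=
          tendsto_const_nhds.congr' (heq.mono fun η hh => hh.symm)
        exact tendsto_nhds_unique htend htend1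
  · intro h
    exact csInf_le hbdd ⟨ht, h⟩

/-- If a decision process has size at most (resp. exactly) `η` for every
`η ∈ [0,1]`, then its p-value statistic is stochastically larger than (resp. exactly)
uniform on `[0,1]`. -/
theorem pvalue_superuniform_and_uniform
    {Ω 𝒳 : Type*} [MeasurableSpace Ω] [MeasurableSpace 𝒳]
    (P : Measure Ω) [IsProbabilityMeasure P]
    (X : Ω → 𝒳) (hX : Measurable X)
    (δ : 𝒳 → ℝ → ℝ) (hδmeas : Measurable (Function.uncurry δ))
    (hvals : ∀ x : 𝒳, ∀ η ∈ Icc (0:ℝ) 1, δ x η = 0 ∨ δ x η = 1)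
    (hreg : ∀ᵐ x ∂(P.map X),
      MonotoneOn (δ x) (Icc (0:ℝ) 1) ∧
      (∀ η ∈ Ico (0:ℝ) 1, ContinuousWithinAt (δ x) (Ici η) η) ∧
      δ x 1 = 1)
    (hsize : ∀ η ∈ Icc (0:ℝ) 1, ∫ ω, δ (X ω) η ∂P ≤ η) :
    (∀ t ∈ Icc (0:ℝ) 1, P {ω | pvalue δ (X ω) ≤ t} ≤ ENNReal.ofReal t) ∧
    ((∀ η ∈ Icc (0:ℝ) 1, ∫ ω, δ (X ω) η ∂P = η) →
      ∀ t ∈ Icc (0:ℝ) 1, P {ω | pvalue δ (X ω) ≤ t} = ENNReal.ofReal t) := by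
  have hreg' : ∀ᵐ ω ∂P,
      MonotoneOn (δ (X ω)) (Icc (0:ℝ) 1) ∧
      (∀ η ∈ Ico (0:ℝ) 1, ContinuousWithinAt (δ (X ω)) (Ici η) η) ∧
      δ (X ω) 1 = 1 := ae_of_ae_map hX.aemeasurable hreg
  have key : ∀ t ∈ Icc (0:ℝ) 1,
      P {ω | pvalue δ (X ω) ≤ t} = ENNReal.ofReal (∫ ω, δ (X ω) t ∂P) := by
    intro t ht
    have hAe : {ω | pvalue δ (X ω) ≤ t} =ᵐ[P] {ω | δ (X ω) t = 1} := by
      filter_upwards [hreg'] with ω hω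
      obtain ⟨hm, hrc, h1⟩ := hω
      exact eq_iff_iff.2 (pvalue_le_iff_aux δ (X ω) (hvals (X ω)) hm hrc h1 ht)
    rw [measure_congr hAe]
    have hmeas : Measurable (fun ω => δ (X ω) t) :=
      hδmeas.comp (hX.prodMk measurable_const)
    have hA : MeasurableSet {ω | δ (X ω) t = 1} :=
      hmeas (measurableSet_singleton 1)
    have hind : ∀ ω, δ (X ω) t
        = Set.indicator {ω | δ (X ω) t = 1} (fun _ => (1:ℝ)) ω := by
      intro ω
      by_cases h : δ (X ω) t = 1
      · simp [Set.indicator_of_mem, h, Set.mem_setOf_eq]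
      · have h0 : δ (X ω) t = 0 := (hvals (X ω) t ht).resolve_right h
        simp [Set.indicator_of_notMem, h, Set.mem_setOf_eq, h0]
    have hint : ∫ ω, δ (X ω) t ∂P = (P {ω | δ (X ω) t = 1}).toReal := by
      rw [integral_congr_ae (Filter.Eventually.of_forall hind),
        integral_indicator_const _ hA, smul_eq_mul, mul_one, measureReal_def]
    rw [hint, ENNReal.ofReal_toReal (measure_ne_top P _)]
  constructor
  · intro t ht
    rw [key t ht]
    exact ENNReal.ofReal_le_ofReal (hsize t ht)
  · intro heq t ht
    rw [key t ht, heq t ht]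
end

section
/- Let (Ω, 𝒜, P) be a probability space, 𝒳 a measurable space, X : Ω → 𝒳 measurable, and let δ_1, …, δ_M : 𝒳 × [0,1] → ℝ be measurable maps with values in {0,1} such that, for (law of X)-almost every x and each m, the map η ↦ δ_m(x,η) is nondecreasing and right-continuous with δ_m(x,1) = 1. Let M₀ ⊆ {1,…,M} and M₁ = {1,…,M} \ M₀. Then the following are equivalent: (i) for every t = (t_1,…,t_M) ∈ [0,1]^M, P(⋂_{m=1}^M {P_{δ_m}(X) ≤ t_m}) = (∏_{m∈M₀} P(P_{δ_m}(X) ≤ t_m)) · P(⋂_{m∈M₁} {P_{δ_m}(X) ≤ t_m}); and (ii) for every d = (d_1,…,d_M) ∈ {0,1}^M and every η = (η_1,…,η_M) ∈ [0,1]^M, P(⋂_{m=1}^M {δ_m(X,η_m) = d_m}) = (∏_{m∈M₀} P(δ_m(X,η_m) = d_m)) · P(⋂_{m∈M₁} {δ_m(X,η_m) = d_m}). -/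
open Set MeasureTheory Filter Topology

section AuxLemmas

lemma pvalue_aux_ptwise {f : ℝ → ℝ} (hmono : MonotoneOn f (Icc 0 1))
    (hrc : ∀ η ∈ Ico (0:ℝ) 1, ContinuousWithinAt f (Ici η) η)
    (h1 : f 1 = 1) (hv : ∀ η ∈ Icc (0:ℝ) 1, f η = 0 ∨ f η = 1)
    {t : ℝ} (ht : t ∈ Icc (0:ℝ) 1) :
    sInf {η : ℝ | η ∈ Icc (0:ℝ) 1 ∧ f η = 1} ≤ t ↔ f t = 1 := by
  set S := {η : ℝ | η ∈ Icc (0:ℝ) 1 ∧ f η = 1} with hS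
  have h1S : (1:ℝ) ∈ S := ⟨⟨zero_le_one, le_refl _⟩, h1⟩
  have hbdd : BddBelow S := ⟨0, fun η hη => hη.1.1⟩
  have hup : ∀ {a b : ℝ}, a ∈ S → a ≤ b → b ≤ 1 → b ∈ S := by
    intro a b ha hab hb1
    have hbI : b ∈ Icc (0:ℝ) 1 := ⟨ha.1.1.trans hab, hb1⟩
    have h1b : (1:ℝ) ≤ f b := ha.2 ▸ hmono ha.1 hbI hab
    rcases hv b hbI with h0 | h1'
    · exact absurd (h0 ▸ h1b) (by norm_num)
    · exact ⟨hbI, h1'⟩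
  have hp0 : 0 ≤ sInf S := le_csInf ⟨1, h1S⟩ (fun η hη => hη.1.1)
  have hp1 : sInf S ≤ 1 := csInf_le hbdd h1S
  have hfp : f (sInf S) = 1 := by
    rcases eq_or_lt_of_le hp1 with heq | hlt
    · rw [heq]; exact h1
    · have hev : ∀ᶠ η in 𝓝[>] (sInf S), f η = 1 := by
        have hmem : Ioc (sInf S) 1 ∈ 𝓝[>] (sInf S) :=
          Ioc_mem_nhdsGT_of_mem ⟨le_refl _, hlt⟩
        filter_upwards [hmem] with η hη
        obtain ⟨s, hsS, hs⟩ := exists_lt_of_csInf_lt ⟨1, h1S⟩ hη.1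
        exact (hup hsS hs.le hη.2).2
      have h2 : Tendsto f (𝓝[>] (sInf S)) (𝓝 (f (sInf S))) :=
        (hrc (sInf S) ⟨hp0, hlt⟩).mono_left (nhdsWithin_mono _ Ioi_subset_Ici_self)
      have h3 : Tendsto f (𝓝[>] (sInf S)) (𝓝 1) :=
        Tendsto.congr' (EventuallyEq.symm hev) tendsto_const_nhds
      exact tendsto_nhds_unique h2 h3
  constructor
  · intro hle
    exact (hup (⟨⟨hp0, hp1⟩, hfp⟩ : sInf S ∈ S) hle ht.2).2
  · intro hft
    exact csInf_le hbdd ⟨ht, hft⟩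

def cselAux {Ω : Type*} {M : ℕ} (A : Fin M → Set Ω) (h : Fin M → Option Bool) (m : Fin M) :
    Set Ω :=
  match h m with
  | some true => A m
  | some false => (A m)ᶜ
  | none => Set.univ

lemma comb_aux {Ω : Type*} [MeasurableSpace Ω] (P : Measure Ω) [IsProbabilityMeasure P]
    {M : ℕ} (A : Fin M → Set Ω) (hA : ∀ m, MeasurableSet (A m)) (M₀ : Finset (Fin M))
    (H : ∀ h : Fin M → Option Bool, (∀ m, h m ≠ some false) →
      P (⋂ m, cselAux A h m) =
        (∏ m ∈ M₀, P (cselAux A h m)) * P (⋂ m ∈ M₀ᶜ, cselAux A h m)) :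
    ∀ n : ℕ, ∀ h : Fin M → Option Bool,
      (Finset.univ.filter fun m => h m = some false).card = n →
      P (⋂ m, cselAux A h m) =
        (∏ m ∈ M₀, P (cselAux A h m)) * P (⋂ m ∈ M₀ᶜ, cselAux A h m) := by
  intro n
  induction n with
  | zero =>
    intro h hcard
    apply H
    intro m hm
    have : m ∈ Finset.univ.filter fun m => h m = some false :=
      Finset.mem_filter.mpr ⟨Finset.mem_univ _, hm⟩
    rw [Finset.card_eq_zero.mp hcard] at this
    exact absurd this (Finset.notMem_empty _)
  | succ n ih =>
    intro h hcard
    obtain ⟨m₀, hm₀f⟩ := Finset.card_pos.mp (by rw [hcard]; exact Nat.succ_pos n)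
    have hm₀ : h m₀ = some false := (Finset.mem_filter.mp hm₀f).2
    set h' := Function.update h m₀ none with hh'
    set h'' := Function.update h m₀ (some true) with hh''
    have hcs' : ∀ m, m ≠ m₀ → cselAux A h' m = cselAux A h m := by
      intro m hm; simp [cselAux, hh', Function.update_of_ne hm]
    have hcs'' : ∀ m, m ≠ m₀ → cselAux A h'' m = cselAux A h m := by
      intro m hm; simp [cselAux, hh'', Function.update_of_ne hm]
    have e0 : cselAux A h m₀ = (A m₀)ᶜ := by simp [cselAux, hm₀]
    have e1 : cselAux A h' m₀ = Set.univ := by simp [cselAux, hh']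
    have e2 : cselAux A h'' m₀ = A m₀ := by simp [cselAux, hh'']
    have hfilt : ∀ g : Option Bool, g ≠ some false →
        (Finset.univ.filter fun m => (Function.update h m₀ g) m = some false).card = n := by
      intro g hg
      have : (Finset.univ.filter fun m => (Function.update h m₀ g) m = some false)
          = (Finset.univ.filter fun m => h m = some false).erase m₀ := by
        ext m
        simp only [Finset.mem_filter, Finset.mem_univ, true_and, Finset.mem_erase]
        constructor
        · intro hm
          rcases eq_or_ne m m₀ with rfl | hne
          · rw [Function.update_self] at hm; exact absurd hm hg
          · rw [Function.update_of_ne hne] at hm; exact ⟨hne, hm⟩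
        · rintro ⟨hne, hm⟩
          rw [Function.update_of_ne hne]; exact hm
      rw [this, Finset.card_erase_of_mem hm₀f, hcard]
      omega
    have ih' := ih h' (hfilt none (by simp))
    have ih'' := ih h'' (hfilt (some true) (by simp))
    have s1 : (⋂ m, cselAux A h m) = (⋂ m, cselAux A h' m) ∩ (A m₀)ᶜ := by
      ext ω
      simp only [Set.mem_iInter, Set.mem_inter_iff]
      constructor
      · intro hω
        refine ⟨fun m => ?_, by have := hω m₀; rwa [e0] at this⟩
        rcases eq_or_ne m m₀ with rfl | hm
        · rw [e1]; trivial
        · rw [hcs' m hm]; exact hω m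
      · rintro ⟨hω1, hω2⟩ m
        rcases eq_or_ne m m₀ with rfl | hm
        · rw [e0]; exact hω2
        · rw [← hcs' m hm]; exact hω1 m
    have s2 : (⋂ m, cselAux A h'' m) = (⋂ m, cselAux A h' m) ∩ A m₀ := by
      ext ω
      simp only [Set.mem_iInter, Set.mem_inter_iff]
      constructor
      · intro hω
        refine ⟨fun m => ?_, by have := hω m₀; rwa [e2] at this⟩
        rcases eq_or_ne m m₀ with rfl | hm
        · rw [e1]; trivial
        · rw [hcs' m hm, ← hcs'' m hm]; exact hω m
      · rintro ⟨hω1, hω2⟩ m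
        rcases eq_or_ne m m₀ with rfl | hm
        · rw [e2]; exact hω2
        · rw [hcs'' m hm, ← hcs' m hm]; exact hω1 m
    have madd : P (⋂ m, cselAux A h'' m) + P (⋂ m, cselAux A h m)
        = P (⋂ m, cselAux A h' m) := by
      rw [s1, s2, ← Set.diff_eq]
      exact measure_inter_add_diff _ (hA m₀)
    by_cases hm₀M : m₀ ∈ M₀
    · have hQ : ∀ g : Fin M → Option Bool, (∀ m, m ≠ m₀ → cselAux A g m = cselAux A h m) →
          (⋂ m ∈ M₀ᶜ, cselAux A g m) = ⋂ m ∈ M₀ᶜ, cselAux A h m := by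
        intro g hg
        refine Set.iInter₂_congr fun m hm => hg m ?_
        rintro rfl
        exact (Finset.mem_compl.mp hm) hm₀M
      have hQ' := hQ h' hcs'
      have hQ'' := hQ h'' hcs''
      have hr : ∀ g : Fin M → Option Bool, (∀ m, m ≠ m₀ → cselAux A g m = cselAux A h m) →
          ∏ m ∈ M₀.erase m₀, P (cselAux A g m) = ∏ m ∈ M₀.erase m₀, P (cselAux A h m) := by
        intro g hg
        exact Finset.prod_congr rfl fun m hm => by rw [hg m (Finset.ne_of_mem_erase hm)]
      have hp : ∏ m ∈ M₀, P (cselAux A h m)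
          = P (A m₀)ᶜ * ∏ m ∈ M₀.erase m₀, P (cselAux A h m) := by
        rw [← Finset.mul_prod_erase M₀ _ hm₀M, e0]
      have hp' : ∏ m ∈ M₀, P (cselAux A h' m)
          = ∏ m ∈ M₀.erase m₀, P (cselAux A h m) := by
        rw [← Finset.mul_prod_erase M₀ _ hm₀M, e1, measure_univ, one_mul, hr h' hcs']
      have hp'' : ∏ m ∈ M₀, P (cselAux A h'' m)
          = P (A m₀) * ∏ m ∈ M₀.erase m₀, P (cselAux A h m) := by
        rw [← Finset.mul_prod_erase M₀ _ hm₀M, e2, hr h'' hcs'']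
      have hcompl : P (A m₀) + P (A m₀)ᶜ = 1 := by
        rw [measure_add_measure_compl (hA m₀), measure_univ]
      have key : (∏ m ∈ M₀, P (cselAux A h'' m)) * P (⋂ m ∈ M₀ᶜ, cselAux A h'' m)
          + (∏ m ∈ M₀, P (cselAux A h m)) * P (⋂ m ∈ M₀ᶜ, cselAux A h m)
          = (∏ m ∈ M₀, P (cselAux A h' m)) * P (⋂ m ∈ M₀ᶜ, cselAux A h' m) := by
        rw [hp, hp', hp'', hQ', hQ'']
        rw [← add_mul, ← add_mul, hcompl, one_mul]
      have fin'' : (∏ m ∈ M₀, P (cselAux A h'' m)) * P (⋂ m ∈ M₀ᶜ, cselAux A h'' m) ≠ ⊤ := by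
        rw [← ih'']; exact measure_ne_top _ _
      have : (∏ m ∈ M₀, P (cselAux A h'' m)) * P (⋂ m ∈ M₀ᶜ, cselAux A h'' m)
          + P (⋂ m, cselAux A h m)
          = (∏ m ∈ M₀, P (cselAux A h'' m)) * P (⋂ m ∈ M₀ᶜ, cselAux A h'' m)
          + (∏ m ∈ M₀, P (cselAux A h m)) * P (⋂ m ∈ M₀ᶜ, cselAux A h m) := by
        conv_lhs => rw [← ih'']
        rw [madd, ih', ← key]
      exact (ENNReal.add_right_inj fin'').mp this
    · have hm₀c : m₀ ∈ M₀ᶜ := Finset.mem_compl.mpr hm₀M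
      have hp : ∀ g : Fin M → Option Bool, (∀ m, m ≠ m₀ → cselAux A g m = cselAux A h m) →
          ∏ m ∈ M₀, P (cselAux A g m) = ∏ m ∈ M₀, P (cselAux A h m) := by
        intro g hg
        exact Finset.prod_congr rfl fun m hm => by
          rw [hg m (by rintro rfl; exact hm₀M hm)]
      have q1 : (⋂ m ∈ M₀ᶜ, cselAux A h m) = (⋂ m ∈ M₀ᶜ, cselAux A h' m) ∩ (A m₀)ᶜ := by
        ext ω
        simp only [Set.mem_iInter, Set.mem_inter_iff]
        constructor
        · intro hω
          refine ⟨fun m hm => ?_, by have := hω m₀ hm₀c; rwa [e0] at this⟩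
          rcases eq_or_ne m m₀ with rfl | hne
          · rw [e1]; trivial
          · rw [hcs' m hne]; exact hω m hm
        · rintro ⟨hω1, hω2⟩ m hm
          rcases eq_or_ne m m₀ with rfl | hne
          · rw [e0]; exact hω2
          · rw [← hcs' m hne]; exact hω1 m hm
      have q2 : (⋂ m ∈ M₀ᶜ, cselAux A h'' m) = (⋂ m ∈ M₀ᶜ, cselAux A h' m) ∩ A m₀ := by
        ext ω
        simp only [Set.mem_iInter, Set.mem_inter_iff]
        constructor
        · intro hω
          refine ⟨fun m hm => ?_, by have := hω m₀ hm₀c; rwa [e2] at this⟩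
          rcases eq_or_ne m m₀ with rfl | hne
          · rw [e1]; trivial
          · rw [hcs' m hne, ← hcs'' m hne]; exact hω m hm
        · rintro ⟨hω1, hω2⟩ m hm
          rcases eq_or_ne m m₀ with rfl | hne
          · rw [e2]; exact hω2
          · rw [hcs'' m hne, ← hcs' m hne]; exact hω1 m hm
      have qadd : P (⋂ m ∈ M₀ᶜ, cselAux A h'' m) + P (⋂ m ∈ M₀ᶜ, cselAux A h m)
          = P (⋂ m ∈ M₀ᶜ, cselAux A h' m) := by
        rw [q1, q2, ← Set.diff_eq]
        exact measure_inter_add_diff _ (hA m₀)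
      have key : (∏ m ∈ M₀, P (cselAux A h'' m)) * P (⋂ m ∈ M₀ᶜ, cselAux A h'' m)
          + (∏ m ∈ M₀, P (cselAux A h m)) * P (⋂ m ∈ M₀ᶜ, cselAux A h m)
          = (∏ m ∈ M₀, P (cselAux A h' m)) * P (⋂ m ∈ M₀ᶜ, cselAux A h' m) := by
        rw [hp h' hcs', hp h'' hcs'', ← mul_add, qadd]
      have fin'' : (∏ m ∈ M₀, P (cselAux A h'' m)) * P (⋂ m ∈ M₀ᶜ, cselAux A h'' m) ≠ ⊤ := by
        rw [← ih'']; exact measure_ne_top _ _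
      have : (∏ m ∈ M₀, P (cselAux A h'' m)) * P (⋂ m ∈ M₀ᶜ, cselAux A h'' m)
          + P (⋂ m, cselAux A h m)
          = (∏ m ∈ M₀, P (cselAux A h'' m)) * P (⋂ m ∈ M₀ᶜ, cselAux A h'' m)
          + (∏ m ∈ M₀, P (cselAux A h m)) * P (⋂ m ∈ M₀ᶜ, cselAux A h m) := by
        conv_lhs => rw [← ih'']
        rw [madd, ih', ← key]
      exact (ENNReal.add_right_inj fin'').mp this

end AuxLemmas

/-- A collection of p-value statistics is `M₀`-independent if and only if the
corresponding multiple decision process is `M₀`-independent. -/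
theorem pvalue_indep_iff_decision_indep
    {Ω 𝒳 : Type*} [MeasurableSpace Ω] [MeasurableSpace 𝒳]
    (P : Measure Ω) [IsProbabilityMeasure P]
    (X : Ω → 𝒳) (hX : Measurable X)
    (M : ℕ) (δ : Fin M → 𝒳 → ℝ → ℝ)
    (hδmeas : ∀ m, Measurable (Function.uncurry (δ m)))
    (hvals : ∀ m, ∀ x : 𝒳, ∀ η ∈ Icc (0:ℝ) 1, δ m x η = 0 ∨ δ m x η = 1)
    (hreg : ∀ᵐ x ∂(P.map X), ∀ m,
      MonotoneOn (δ m x) (Icc (0:ℝ) 1) ∧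
      (∀ η ∈ Ico (0:ℝ) 1, ContinuousWithinAt (δ m x) (Ici η) η) ∧
      δ m x 1 = 1)
    (M₀ : Finset (Fin M)) :
    (∀ t : Fin M → ℝ, (∀ m, t m ∈ Icc (0:ℝ) 1) →
      P (⋂ m, {ω | pvalue (δ m) (X ω) ≤ t m}) =
        (∏ m ∈ M₀, P {ω | pvalue (δ m) (X ω) ≤ t m}) *
          P (⋂ m ∈ M₀ᶜ, {ω | pvalue (δ m) (X ω) ≤ t m})) ↔
    (∀ d : Fin M → ℝ, (∀ m, d m = 0 ∨ d m = 1) →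
      ∀ η : Fin M → ℝ, (∀ m, η m ∈ Icc (0:ℝ) 1) →
        P (⋂ m, {ω | δ m (X ω) (η m) = d m}) =
          (∏ m ∈ M₀, P {ω | δ m (X ω) (η m) = d m}) *
            P (⋂ m ∈ M₀ᶜ, {ω | δ m (X ω) (η m) = d m})) := by
  classical
  have hregω : ∀ᵐ ω ∂P, ∀ m,
      MonotoneOn (δ m (X ω)) (Icc (0:ℝ) 1) ∧
      (∀ η ∈ Ico (0:ℝ) 1, ContinuousWithinAt (δ m (X ω)) (Ici η) η) ∧
      δ m (X ω) 1 = 1 := ae_of_ae_map hX.aemeasurable hreg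
  have hae : ∀ᵐ ω ∂P, ∀ m, ∀ t ∈ Icc (0:ℝ) 1,
      (pvalue (δ m) (X ω) ≤ t ↔ δ m (X ω) t = 1) := by
    filter_upwards [hregω] with ω hω m t ht
    exact pvalue_aux_ptwise (hω m).1 (hω m).2.1 (hω m).2.2 (hvals m (X ω)) ht
  have hone : ∀ᵐ ω ∂P, ∀ m, δ m (X ω) 1 = 1 := by
    filter_upwards [hregω] with ω hω m
    exact (hω m).2.2
  -- a congruence helper
  have hcong : ∀ s u : Fin M → Set Ω, (∀ᵐ ω ∂P, ∀ m, ω ∈ s m ↔ ω ∈ u m) →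
      P (⋂ m, s m) = P (⋂ m, u m)
      ∧ (∏ m ∈ M₀, P (s m)) = (∏ m ∈ M₀, P (u m))
      ∧ P (⋂ m ∈ M₀ᶜ, s m) = P (⋂ m ∈ M₀ᶜ, u m) := by
    intro s u hsu
    have hm : ∀ m, P (s m) = P (u m) := fun m =>
      measure_congr (by rw [Filter.eventuallyEq_set]; filter_upwards [hsu] with ω hω; exact hω m)
    refine ⟨measure_congr ?_, Finset.prod_congr rfl fun m _ => hm m, measure_congr ?_⟩
    · rw [Filter.eventuallyEq_set]
      filter_upwards [hsu] with ω hω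
      simp only [Set.mem_iInter]
      exact forall_congr' hω
    · rw [Filter.eventuallyEq_set]
      filter_upwards [hsu] with ω hω
      simp only [Set.mem_iInter]
      exact forall_congr' fun m => imp_congr Iff.rfl (hω m)
  constructor
  · -- (i) → (ii)
    intro hi d hd η hη
    set A : Fin M → Set Ω := fun m => {ω | δ m (X ω) (η m) = 1} with hA
    have hAmeas : ∀ m, MeasurableSet (A m) := by
      intro m
      have hmes : Measurable fun ω => δ m (X ω) (η m) :=
        (hδmeas m).comp (hX.prodMk measurable_const)
      exact hmes (measurableSet_singleton 1)
    have H : ∀ h : Fin M → Option Bool, (∀ m, h m ≠ some false) →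
        P (⋂ m, cselAux A h m) =
          (∏ m ∈ M₀, P (cselAux A h m)) * P (⋂ m ∈ M₀ᶜ, cselAux A h m) := by
      intro h hh
      set t : Fin M → ℝ := fun m => if h m = some true then η m else 1 with hT
      have ht : ∀ m, t m ∈ Icc (0:ℝ) 1 := by
        intro m
        by_cases hc : h m = some true
        · simp only [hT, hc, if_pos]; exact hη m
        · simp only [hT, hc, if_neg, if_false]
          exact ⟨zero_le_one, le_refl _⟩
      have haemem : ∀ᵐ ω ∂P, ∀ m,
          (ω ∈ {ω | pvalue (δ m) (X ω) ≤ t m} ↔ ω ∈ cselAux A h m) := by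
        filter_upwards [hae, hone] with ω hω hω1 m
        match hc : h m with
        | some true =>
          have htm : t m = η m := by simp [hT, hc]
          simp only [cselAux, hc, Set.mem_setOf_eq, htm, hA]
          exact hω m (η m) (hη m)
        | some false => exact absurd hc (hh m)
        | none =>
          have htm : t m = 1 := by simp [hT, hc]
          simp only [cselAux, hc, Set.mem_setOf_eq, Set.mem_univ, htm, iff_true]
          exact (hω m 1 ⟨zero_le_one, le_refl _⟩).mpr (hω1 m)
      obtain ⟨c1, c2, c3⟩ := hcong (fun m => {ω | pvalue (δ m) (X ω) ≤ t m})
        (cselAux A h) haemem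
      rw [← c1, ← c2, ← c3]
      exact hi t ht
    have hseteq : ∀ m, {ω | δ m (X ω) (η m) = d m}
        = cselAux A (fun m => some (decide (d m = 1))) m := by
      intro m
      rcases hd m with h0 | h1
      · have hne : ¬ (d m = 1) := by rw [h0]; norm_num
        have hred : cselAux A (fun m => some (decide (d m = 1))) m = (A m)ᶜ := by
          unfold cselAux
          simp only [decide_eq_false hne]
        rw [hred]
        ext ω
        simp only [Set.mem_setOf_eq, Set.mem_compl_iff, hA, h0]
        constructor
        · intro hω hω1
          exact absurd (hω.symm.trans hω1) (by norm_num)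
        · intro hω
          rcases hvals m (X ω) (η m) (hη m) with hv0 | hv1
          · exact hv0
          · exact absurd hv1 hω
      · have hred : cselAux A (fun m => some (decide (d m = 1))) m = A m := by
          unfold cselAux
          simp only [decide_eq_true h1]
        rw [hred]; simp only [hA, h1]
    have g1 : (⋂ m, {ω | δ m (X ω) (η m) = d m})
        = ⋂ m, cselAux A (fun m => some (decide (d m = 1))) m := Set.iInter_congr hseteq
    have g2 : (⋂ m ∈ M₀ᶜ, {ω | δ m (X ω) (η m) = d m})
        = ⋂ m ∈ M₀ᶜ, cselAux A (fun m => some (decide (d m = 1))) m :=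
      Set.iInter₂_congr fun m _ => hseteq m
    have g3 : (∏ m ∈ M₀, P {ω | δ m (X ω) (η m) = d m})
        = ∏ m ∈ M₀, P (cselAux A (fun m => some (decide (d m = 1))) m) :=
      Finset.prod_congr rfl fun m _ => by rw [hseteq m]
    rw [g1, g2, g3]
    exact comb_aux P A hAmeas M₀ H _ (fun m => some (decide (d m = 1))) rfl
  · -- (ii) → (i)
    intro hii t ht
    have haemem : ∀ᵐ ω ∂P, ∀ m,
        (ω ∈ {ω | pvalue (δ m) (X ω) ≤ t m} ↔ ω ∈ {ω | δ m (X ω) (t m) = (1:ℝ)}) := by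
      filter_upwards [hae] with ω hω m
      exact hω m (t m) (ht m)
    obtain ⟨c1, c2, c3⟩ := hcong (fun m => {ω | pvalue (δ m) (X ω) ≤ t m})
      (fun m => {ω | δ m (X ω) (t m) = (1:ℝ)}) haemem
    rw [c1, c2, c3]
    exact hii (fun _ => 1) (fun _ => Or.inr rfl) t ht
end

section
/- Let (Ω, 𝒜, P) be a probability space, 𝒴 and 𝒵 measurable spaces, Y : Ω → 𝒴 and Z : Ω → 𝒵 measurable maps, and δ : 𝒴 × 𝒵 × [0,1] → ℝ a measurable map with values in {0,1} such that, for (law of (Y,Z))-almost every (y,z), the map η ↦ δ(y,z,η) is nondecreasing and right-continuous with δ(y,z,1) = 1. Suppose that for every η ∈ [0,1], the conditional expectation E[δ(Y,Z,η) | σ(Y)] = η almost surely. Then for every t ∈ [0,1], P(P_δ(Y,Z) ≤ t) = t, where P_δ(y,z) = inf{η ∈ [0,1] : δ(y,z,η) = 1}. -/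
open Set MeasureTheory

/-- The p-value statistic of a decision process `δ` depending on training data `y` and
test data `z`. -/
noncomputable def pvalue2 {𝒴 𝒵 : Type*} (δ : 𝒴 → 𝒵 → ℝ → ℝ) (y : 𝒴) (z : 𝒵) : ℝ :=
  sInf {η : ℝ | η ∈ Icc (0:ℝ) 1 ∧ δ y z η = 1}

lemma pvalue2_le_iff {𝒴 𝒵 : Type*} (δ : 𝒴 → 𝒵 → ℝ → ℝ) (y : 𝒴) (z : 𝒵)
    (hvals : ∀ η ∈ Icc (0:ℝ) 1, δ y z η = 0 ∨ δ y z η = 1)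
    (hmono : MonotoneOn (δ y z) (Icc (0:ℝ) 1))
    (hrc : ∀ η ∈ Ico (0:ℝ) 1, ContinuousWithinAt (δ y z) (Ici η) η)
    (h1 : δ y z 1 = 1) {t : ℝ} (ht : t ∈ Icc (0:ℝ) 1) :
    pvalue2 δ y z ≤ t ↔ δ y z t = 1 := by
  set S : Set ℝ := {η : ℝ | η ∈ Icc (0:ℝ) 1 ∧ δ y z η = 1} with hSdef
  have hS1 : (1:ℝ) ∈ S := ⟨⟨zero_le_one, le_refl _⟩, h1⟩
  have hbdd : BddBelow S := ⟨0, fun η hη => hη.1.1⟩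
  constructor
  · intro h
    by_contra hne
    have h0 : δ y z t = 0 := (hvals t ht).resolve_right hne
    have hlb : ∀ η ∈ S, t < η := by
      intro η hη
      by_contra hle
      push_neg at hle
      have := hmono hη.1 ht hle
      rw [hη.2, h0] at this
      linarith
    have ht1 : t < 1 := lt_of_le_of_ne ht.2 (fun h' => hne (h' ▸ h1))
    have heq : sInf S = t := le_antisymm h (le_csInf ⟨1, hS1⟩ fun η hη => (hlb η hη).le)
    have hrct := hrc t ⟨ht.1, ht1⟩
    have hh : ∀ᶠ η in nhdsWithin t (Ici t), δ y z η < 1/2 := by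
      have : Filter.Tendsto (δ y z) (nhdsWithin t (Ici t)) (nhds (δ y z t)) := hrct
      rw [h0] at this
      exact this.eventually_lt_const (by norm_num)
    rw [Filter.eventually_iff, mem_nhdsGE_iff_exists_Ico_subset] at hh
    obtain ⟨u, hu, hsub⟩ := hh
    rw [← heq] at hu
    obtain ⟨η, hηS, hηu⟩ := exists_lt_of_csInf_lt ⟨1, hS1⟩ hu
    have : δ y z η < 1/2 := hsub ⟨(hlb η hηS).le, hηu⟩
    rw [hηS.2] at this
    linarith
  · intro h
    exact csInf_le hbdd ⟨ht, h⟩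

/-- If, conditionally on the training data `Y`, a decision process has size
exactly `η` for every `η ∈ [0,1]`, then its p-value statistic is uniformly distributed. -/
theorem pvalue_uniform_of_condexp_size
    {Ω 𝒴 𝒵 : Type*} [MeasurableSpace Ω] [MeasurableSpace 𝒴] [MeasurableSpace 𝒵]
    (P : Measure Ω) [IsProbabilityMeasure P]
    (Y : Ω → 𝒴) (hY : Measurable Y) (Z : Ω → 𝒵) (hZ : Measurable Z)
    (δ : 𝒴 → 𝒵 → ℝ → ℝ)
    (hδmeas : Measurable (fun p : 𝒴 × 𝒵 × ℝ => δ p.1 p.2.1 p.2.2))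
    (hvals : ∀ (y : 𝒴) (z : 𝒵), ∀ η ∈ Icc (0:ℝ) 1, δ y z η = 0 ∨ δ y z η = 1)
    (hreg : ∀ᵐ p ∂(P.map (fun ω => (Y ω, Z ω))),
      MonotoneOn (δ p.1 p.2) (Icc (0:ℝ) 1) ∧
      (∀ η ∈ Ico (0:ℝ) 1, ContinuousWithinAt (δ p.1 p.2) (Ici η) η) ∧
      δ p.1 p.2 1 = 1)
    (hcond : ∀ η ∈ Icc (0:ℝ) 1,
      P[fun ω => δ (Y ω) (Z ω) η | MeasurableSpace.comap Y inferInstance]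
        =ᵐ[P] fun _ => η) :
    ∀ t ∈ Icc (0:ℝ) 1,
      P {ω | pvalue2 δ (Y ω) (Z ω) ≤ t} = ENNReal.ofReal t := by
  intro t ht
  -- f ω = δ (Y ω) (Z ω) t
  set f : Ω → ℝ := fun ω => δ (Y ω) (Z ω) t with hfdef
  have hfmeas : Measurable f :=
    hδmeas.comp ((hY.prodMk (hZ.prodMk measurable_const)))
  have hYZ : Measurable (fun ω => (Y ω, Z ω)) := hY.prodMk hZ
  -- transfer hreg to Ω
  have hregΩ : ∀ᵐ ω ∂P,
      MonotoneOn (δ (Y ω) (Z ω)) (Icc (0:ℝ) 1) ∧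
      (∀ η ∈ Ico (0:ℝ) 1, ContinuousWithinAt (δ (Y ω) (Z ω)) (Ici η) η) ∧
      δ (Y ω) (Z ω) 1 = 1 := ae_of_ae_map hYZ.aemeasurable hreg
  set A : Set Ω := f ⁻¹' {1} with hAdef
  have hAmeas : MeasurableSet A := hfmeas (measurableSet_singleton 1)
  -- the two sets are a.e. equal
  have hae : {ω | pvalue2 δ (Y ω) (Z ω) ≤ t} =ᵐ[P] A := by
    rw [Filter.eventuallyEq_set]
    filter_upwards [hregΩ] with ω hω
    have := pvalue2_le_iff δ (Y ω) (Z ω) (hvals (Y ω) (Z ω)) hω.1 hω.2.1 hω.2.2 ht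
    simpa [A, f] using this
  rw [measure_congr hae]
  -- f is the indicator of A
  have hfind : f = A.indicator (fun _ => (1:ℝ)) := by
    funext ω
    rcases hvals (Y ω) (Z ω) t ht with h0 | h1
    · have : ω ∉ A := by simp [A, f, h0]
      simp [indicator_of_notMem this, f, h0]
    · have : ω ∈ A := by simp [A, f, h1]
      simp [indicator_of_mem this, f, h1]
  -- integrability of f
  have hfint : Integrable f P := by
    rw [hfind]
    exact (integrable_const (1:ℝ)).indicator hAmeas
  -- integral of f equals t
  have hint : ∫ ω, f ω ∂P = t := by
    have h1 : ∫ ω, f ω ∂P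
        = ∫ ω, (P[f | MeasurableSpace.comap Y inferInstance]) ω ∂P :=
      (integral_condExp hY.comap_le).symm
    rw [h1, integral_congr_ae (hcond t ht)]
    simp
  -- conclude
  have : (P A).toReal = t := by
    rw [← hint, hfind]; simp [integral_indicator_const (1:ℝ) hAmeas, Measure.real]
  rw [← this, ENNReal.ofReal_toReal (measure_ne_top P A)]
end

section
/- Let (Ω, 𝒜, P) be a probability space and, for m = 1,…,M, let Y_m : Ω → 𝒴_m and Z_m : Ω → 𝒵_m be measurable maps; write Y = (Y_1,…,Y_M). Let M₀ ⊆ {1,…,M} and M₁ = {1,…,M} \ M₀. For each m let δ_m : (𝒴_1 × ⋯ × 𝒴_M) × 𝒵_m × [0,1] → ℝ be measurable with values in {0,1} such that almost surely the map η ↦ δ_m(Y, Z_m, η) is nondecreasing and right-continuous with δ_m(Y, Z_m, 1) = 1. Assume: (i) the random pairs (Y_m, Z_m) for m ∈ M₀, together with the joint vector ((Y_m, Z_m))_{m∈M₁} regarded as a single block, form a mutually independent family; and (ii) for every m ∈ M₀ and every η ∈ [0,1], E[δ_m(Y, Z_m, η) | σ(Y)] = η almost surely. Then for every t = (t_1,…,t_M)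 ∈ [0,1]^M, P(⋂_{m=1}^M {P_{δ_m}(Y, Z_m) ≤ t_m}) = (∏_{m∈M₀} t_m) · P(⋂_{m∈M₁} {P_{δ_m}(Y, Z_m) ≤ t_m}), where P_{δ_m}(y, z_m) = inf{η ∈ [0,1] : δ_m(y, z_m, η) = 1}. -/
open Set MeasureTheory

/-- Index `some m` (for `m ∈ M₀`) stands for the pair `(Y_m, Z_m)`; index `none` stands for
the whole block `((Y_m, Z_m))_{m ∉ M₀}`. -/
def blockType {M : ℕ} (𝒴 𝒵 : Fin M → Type*) (M₀ : Finset (Fin M)) :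
    Option {m : Fin M // m ∈ M₀} → Type _
  | some m => 𝒴 m.1 × 𝒵 m.1
  | none => ∀ k : {m : Fin M // m ∉ M₀}, 𝒴 k.1 × 𝒵 k.1

/-- The product measurable structure on each block. -/
def blockMS {M : ℕ} (𝒴 𝒵 : Fin M → Type*) [∀ m, MeasurableSpace (𝒴 m)]
    [∀ m, MeasurableSpace (𝒵 m)] (M₀ : Finset (Fin M)) :
    ∀ i, MeasurableSpace (blockType 𝒴 𝒵 M₀ i)
  | some m => (inferInstance : MeasurableSpace (𝒴 m.1 × 𝒵 m.1))
  | none => (inferInstance : MeasurableSpace (∀ k : {m : Fin M // m ∉ M₀}, 𝒴 k.1 × 𝒵 k.1))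

/-- The family of random blocks: `(Y_m, Z_m)` for `m ∈ M₀`, and the joint vector
`((Y_m, Z_m))_{m ∉ M₀}` as a single block. -/
def blockFun {Ω : Type*} {M : ℕ} {𝒴 𝒵 : Fin M → Type*} (M₀ : Finset (Fin M))
    (Y : ∀ m, Ω → 𝒴 m) (Z : ∀ m, Ω → 𝒵 m) :
    ∀ i, Ω → blockType 𝒴 𝒵 M₀ i
  | some m => fun ω => (Y m.1 ω, Z m.1 ω)
  | none => fun ω k => (Y k.1 ω, Z k.1 ω)

set_option linter.unusedSectionVars false

lemma pvalue_le_iff (f : ℝ → ℝ) {t : ℝ} (ht : t ∈ Icc (0:ℝ) 1)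
    (hvals : ∀ η ∈ Icc (0:ℝ) 1, f η = 0 ∨ f η = 1)
    (hmono : MonotoneOn f (Icc (0:ℝ) 1))
    (hrc : ∀ η ∈ Ico (0:ℝ) 1, ContinuousWithinAt f (Ici η) η)
    (h1 : f 1 = 1) :
    sInf {η : ℝ | η ∈ Icc (0:ℝ) 1 ∧ f η = 1} ≤ t ↔ f t = 1 := by
  set A : Set ℝ := {η : ℝ | η ∈ Icc (0:ℝ) 1 ∧ f η = 1} with hA
  have hne : A.Nonempty := ⟨1, ⟨by norm_num, le_rfl⟩, h1⟩
  have hbdd : BddBelow A := ⟨0, fun x hx => hx.1.1⟩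
  constructor
  · intro hle
    -- f η = 1 for all η in (t, 1]
    have hone : ∀ η, t < η → η ≤ 1 → f η = 1 := by
      intro η htη hη1
      obtain ⟨x, hxA, hxlt⟩ := exists_lt_of_csInf_lt hne (lt_of_le_of_lt hle htη)
      have hηI : η ∈ Icc (0:ℝ) 1 := ⟨le_trans hxA.1.1 hxlt.le, hη1⟩
      have := hmono hxA.1 hηI hxlt.le
      rcases hvals η hηI with h0 | h1' 
      · exfalso; rw [hxA.2, h0] at this; linarith
      · exact h1'
    rcases eq_or_lt_of_le ht.2 with h | h
    · rw [← h] at h1 ⊢; exact h1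
    · -- t < 1, use right continuity
      have hrct := hrc t ⟨ht.1, h⟩
      have htend : Filter.Tendsto f (nhdsWithin t (Ioi t)) (nhds (f t)) :=
        hrct.tendsto.mono_left (nhdsWithin_mono t Ioi_subset_Ici_self)
      have hev : ∀ᶠ η in nhdsWithin t (Ioi t), f η = 1 := by
        filter_upwards [Ioo_mem_nhdsGT_of_mem ⟨le_refl t, h⟩] with η hη
        exact hone η hη.1 hη.2.le
      have : Filter.Tendsto f (nhdsWithin t (Ioi t)) (nhds 1) := by
        refine Filter.Tendsto.congr' ?_ tendsto_const_nhds
        filter_upwards [hev] with η hη using hη.symm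
      exact tendsto_nhds_unique htend this
  · intro hft
    exact csInf_le hbdd ⟨ht, hft⟩

section Aux

variable {M : ℕ} (𝒴 𝒵 : Fin M → Type*) [∀ m, MeasurableSpace (𝒴 m)]
  [∀ m, MeasurableSpace (𝒵 m)] (M₀ : Finset (Fin M)) (m0 : Fin M) (hm0 : m0 ∈ M₀)

/-- type of the tuple of all blocks except block `m0`. -/
def VType : Type _ :=
  ∀ j : {i : Option {m : Fin M // m ∈ M₀} // i ≠ some ⟨m0, hm0⟩}, blockType 𝒴 𝒵 M₀ j.1

/-- the measurable structure on `VType`. -/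
def VMS : MeasurableSpace (VType 𝒴 𝒵 M₀ m0 hm0) :=
  @MeasurableSpace.pi _ _ (fun j => blockMS 𝒴 𝒵 M₀ j.1)

/-- type of the vector of all `Y`-coordinates except `m0`. -/
abbrev YRest (𝒴 : Fin M → Type*) (m0 : Fin M) : Type _ := ∀ k : {k : Fin M // k ≠ m0}, 𝒴 k.1

/-- assembling a full `Y`-vector from the `m0`-coordinate and the rest. -/
def asmW (m0 : Fin M) (y : 𝒴 m0) (w : YRest 𝒴 m0) (k : Fin M) : 𝒴 k :=
  if h : k = m0 then cast (congrArg 𝒴 h).symm y else w ⟨k, h⟩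

lemma asmW_measurable (m0 : Fin M) :
    Measurable (fun p : 𝒴 m0 × YRest 𝒴 m0 => asmW 𝒴 m0 p.1 p.2) := by
  apply measurable_pi_lambda
  intro k
  by_cases h : k = m0
  · subst h
    have : (fun p : 𝒴 k × YRest 𝒴 k => asmW 𝒴 k p.1 p.2 k) = fun p => p.1 := by
      funext p
      rw [asmW, dif_pos rfl]; exact cast_eq _ _
    rw [this]; exact measurable_fst
  · have : (fun p : 𝒴 m0 × YRest 𝒴 m0 => asmW 𝒴 m0 p.1 p.2 k)
        = fun p => p.2 ⟨k, h⟩ := by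
      funext p; rw [asmW, dif_neg h]
    rw [this]
    exact (measurable_pi_apply _).comp measurable_snd

/-- extracting the `Y`-coordinates (except `m0`) from the blocks except `m0`. -/
def extractY (v : VType 𝒴 𝒵 M₀ m0 hm0) (k : {k : Fin M // k ≠ m0}) : 𝒴 k.1 :=
  if hk : k.1 ∈ M₀ then
    (v ⟨some ⟨k.1, hk⟩, by simp only [ne_eq, Option.some.injEq, Subtype.mk.injEq]; exact k.2⟩).1
  else (v ⟨none, by simp⟩ ⟨k.1, hk⟩).1

/-- extracting the `Z`-coordinate of an index `j ≠ m0` from the blocks except `m0`. -/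
def extractZ (j : Fin M) (hj : j ≠ m0) (v : VType 𝒴 𝒵 M₀ m0 hm0) : 𝒵 j :=
  if hk : j ∈ M₀ then
    (v ⟨some ⟨j, hk⟩, by simp only [ne_eq, Option.some.injEq, Subtype.mk.injEq]; exact hj⟩).2
  else (v ⟨none, by simp⟩ ⟨j, hk⟩).2

lemma extractY_measurable :
    @Measurable _ _ (VMS 𝒴 𝒵 M₀ m0 hm0) _ (extractY 𝒴 𝒵 M₀ m0 hm0) := by
  letI : ∀ i, MeasurableSpace (blockType 𝒴 𝒵 M₀ i) := blockMS 𝒴 𝒵 M₀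
  letI := VMS 𝒴 𝒵 M₀ m0 hm0
  apply measurable_pi_lambda
  intro k
  by_cases hk : k.1 ∈ M₀
  · have : (fun v => extractY 𝒴 𝒵 M₀ m0 hm0 v k) = fun v =>
        (v ⟨some ⟨k.1, hk⟩, by simp only [ne_eq, Option.some.injEq, Subtype.mk.injEq]; exact k.2⟩).1 := by
      funext v; rw [extractY, dif_pos hk]
    rw [this]
    exact (@measurable_fst _ _ _ _).comp (measurable_pi_apply _)
  · have : (fun v => extractY 𝒴 𝒵 M₀ m0 hm0 v k) = fun v =>
        (v ⟨none, by simp⟩ ⟨k.1, hk⟩).1 := by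
      funext v; rw [extractY, dif_neg hk]
    rw [this]
    exact (@measurable_fst _ _ _ _).comp ((measurable_pi_apply _).comp (measurable_pi_apply _))

lemma extractZ_measurable (j : Fin M) (hj : j ≠ m0) :
    @Measurable _ _ (VMS 𝒴 𝒵 M₀ m0 hm0) _ (extractZ 𝒴 𝒵 M₀ m0 hm0 j hj) := by
  letI : ∀ i, MeasurableSpace (blockType 𝒴 𝒵 M₀ i) := blockMS 𝒴 𝒵 M₀
  letI := VMS 𝒴 𝒵 M₀ m0 hm0
  by_cases hk : j ∈ M₀
  · have : extractZ 𝒴 𝒵 M₀ m0 hm0 j hj = fun v =>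
        (v ⟨some ⟨j, hk⟩, by simp only [ne_eq, Option.some.injEq, Subtype.mk.injEq]; exact hj⟩).2 := by
      funext v; rw [extractZ, dif_pos hk]
    rw [this]
    exact (@measurable_snd _ _ _ _).comp (measurable_pi_apply _)
  · have : extractZ 𝒴 𝒵 M₀ m0 hm0 j hj = fun v =>
        (v ⟨none, by simp⟩ ⟨j, hk⟩).2 := by
      funext v; rw [extractZ, dif_neg hk]
    rw [this]
    exact (@measurable_snd _ _ _ _).comp ((measurable_pi_apply _).comp (measurable_pi_apply _))

end Aux

section Peel

open ProbabilityTheory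

variable {Ω : Type*} [MeasurableSpace Ω] (P : Measure Ω) [IsProbabilityMeasure P]
  {M : ℕ} {𝒴 𝒵 : Fin M → Type*} [∀ m, MeasurableSpace (𝒴 m)] [∀ m, MeasurableSpace (𝒵 m)]

lemma blockFun_measurable (Y : ∀ m, Ω → 𝒴 m) (hY : ∀ m, Measurable (Y m))
    (Z : ∀ m, Ω → 𝒵 m) (hZ : ∀ m, Measurable (Z m)) (M₀ : Finset (Fin M)) :
    ∀ i, @Measurable _ _ _ (blockMS 𝒴 𝒵 M₀ i) (blockFun M₀ Y Z i) := by
  intro i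
  cases i with
  | some m => exact (hY m.1).prodMk (hZ m.1)
  | none => exact measurable_pi_lambda _ fun k => (hY k.1).prodMk (hZ k.1)

lemma peel (Y : ∀ m, Ω → 𝒴 m) (hY : ∀ m, Measurable (Y m))
    (Z : ∀ m, Ω → 𝒵 m) (hZ : ∀ m, Measurable (Z m))
    (M₀ : Finset (Fin M))
    (hindep : ProbabilityTheory.iIndepFun (m := blockMS 𝒴 𝒵 M₀) (blockFun M₀ Y Z) P)
    (m0 : Fin M) (hm0 : m0 ∈ M₀)
    (f : (∀ k, 𝒴 k) → 𝒵 m0 → ℝ)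
    (hfm : Measurable fun p : (∀ k, 𝒴 k) × 𝒵 m0 => f p.1 p.2)
    (hfb : ∀ y z, |f y z| ≤ 1) (t : ℝ)
    (hc : ∀ D : Set Ω,
      MeasurableSet[MeasurableSpace.comap (fun ω (k : Fin M) => Y k ω) inferInstance] D →
      ∫ ω in D, f (fun k => Y k ω) (Z m0 ω) ∂P = t * (P D).toReal) :
    ∀ s : Set (𝒴 m0 × VType 𝒴 𝒵 M₀ m0 hm0),
      MeasurableSet[@Prod.instMeasurableSpace _ _ _ (VMS 𝒴 𝒵 M₀ m0 hm0)] s →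
      ∫ ω in (fun ω => ((Y m0 ω, fun j => blockFun M₀ Y Z j.1 ω) :
          𝒴 m0 × VType 𝒴 𝒵 M₀ m0 hm0)) ⁻¹' s, f (fun k => Y k ω) (Z m0 ω) ∂P
        = t * (P ((fun ω => ((Y m0 ω, fun j => blockFun M₀ Y Z j.1 ω) :
            𝒴 m0 × VType 𝒴 𝒵 M₀ m0 hm0)) ⁻¹' s)).toReal := by
  letI mB : ∀ i, MeasurableSpace (blockType 𝒴 𝒵 M₀ i) := blockMS 𝒴 𝒵 M₀
  letI mV : MeasurableSpace (VType 𝒴 𝒵 M₀ m0 hm0) := VMS 𝒴 𝒵 M₀ m0 hm0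
  -- basic objects
  set i0 : Option {m : Fin M // m ∈ M₀} := some ⟨m0, hm0⟩ with hi0def
  set U : Ω → 𝒴 m0 × 𝒵 m0 := fun ω => (Y m0 ω, Z m0 ω) with hUdef
  set V : Ω → VType 𝒴 𝒵 M₀ m0 hm0 := fun ω j => blockFun M₀ Y Z j.1 ω with hVdef
  set Yr : Ω → YRest 𝒴 m0 := fun ω k => Y k.1 ω with hYrdef
  have hU : Measurable U := (hY m0).prodMk (hZ m0)
  have hV : Measurable V :=
    measurable_pi_lambda _ fun j => blockFun_measurable Y hY Z hZ M₀ j.1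
  have hYr : Measurable Yr := measurable_pi_lambda _ fun k => hY k.1
  have hEY := extractY_measurable 𝒴 𝒵 M₀ m0 hm0
  -- identities
  have hYrV : Yr = extractY 𝒴 𝒵 M₀ m0 hm0 ∘ V := by
    funext ω k
    rw [Function.comp_apply]
    by_cases hk : k.1 ∈ M₀ <;> simp [extractY, hk, hYrdef, hVdef, blockFun]
  have hasm : ∀ ω, asmW 𝒴 m0 (Y m0 ω) (Yr ω) = fun k => Y k ω := by
    intro ω; funext k
    by_cases h : k = m0
    · subst h; rw [asmW, dif_pos rfl]; exact cast_eq _ _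
    · rw [asmW, dif_neg h]
  -- independence
  have hUV : IndepFun U V P := by
    have hbm : ∀ i, Measurable (blockFun M₀ Y Z i) := blockFun_measurable Y hY Z hZ M₀
    have h1 := hindep.indepFun_finset {i0} ({i0}ᶜ) disjoint_compl_right hbm
    have hπ : Measurable (fun x : ∀ i : ({i0} : Finset (Option {m : Fin M // m ∈ M₀})),
        blockType 𝒴 𝒵 M₀ i.1 => x ⟨i0, Finset.mem_singleton_self i0⟩) := measurable_pi_apply _
    have hρ : Measurable (fun (x : ∀ i : (({i0}ᶜ : Finset (Option {m : Fin M // m ∈ M₀}))),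
        blockType 𝒴 𝒵 M₀ i.1) (j : {i : Option {m : Fin M // m ∈ M₀} // i ≠ i0}) =>
        x ⟨j.1, Finset.mem_compl.mpr (Finset.notMem_singleton.mpr j.2)⟩) :=
      measurable_pi_lambda _ fun j => measurable_pi_apply _
    exact h1.comp hπ hρ
  have hUYr : IndepFun U Yr P := by
    rw [hYrV]
    exact hUV.comp measurable_id hEY
  -- laws
  set μU : Measure (𝒴 m0 × 𝒵 m0) := P.map U with hmuU
  set μV : Measure (VType 𝒴 𝒵 M₀ m0 hm0) := P.map V with hmuV
  set μW : Measure (YRest 𝒴 m0) := P.map Yr with hmuW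
  haveI : IsProbabilityMeasure μU := Measure.isProbabilityMeasure_map hU.aemeasurable
  haveI : IsProbabilityMeasure μV := Measure.isProbabilityMeasure_map hV.aemeasurable
  haveI : IsProbabilityMeasure μW := Measure.isProbabilityMeasure_map hYr.aemeasurable
  have hlawV : P.map (fun ω => (U ω, V ω)) = μU.prod μV :=
    (indepFun_iff_map_prod_eq_prod_map_map hU.aemeasurable hV.aemeasurable).mp hUV
  have hlawW : P.map (fun ω => (U ω, Yr ω)) = μU.prod μW :=
    (indepFun_iff_map_prod_eq_prod_map_map hU.aemeasurable hYr.aemeasurable).mp hUYr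
  have hmuWV : μW = μV.map (extractY 𝒴 𝒵 M₀ m0 hm0) := by
    rw [hmuW, hmuV, hYrV, ← Measure.map_map hEY hV]
  -- the integrand on the (U, Yr)-product space
  set G : (𝒴 m0 × 𝒵 m0) × YRest 𝒴 m0 → ℝ :=
    fun p => f (asmW 𝒴 m0 p.1.1 p.2) p.1.2 with hGdef
  have hGmeas : Measurable G := by
    have : G = (fun p : (∀ k, 𝒴 k) × 𝒵 m0 => f p.1 p.2) ∘
        (fun p : (𝒴 m0 × 𝒵 m0) × YRest 𝒴 m0 => (asmW 𝒴 m0 p.1.1 p.2, p.1.2)) := rfl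
    rw [this]
    exact hfm.comp (((asmW_measurable 𝒴 m0).comp
      ((measurable_fst.comp measurable_fst).prodMk measurable_snd)).prodMk
      (measurable_snd.comp measurable_fst))
  have hGbd : ∀ p, |G p| ≤ 1 := fun p => hfb _ _
  have hGint : ∀ (μ : Measure ((𝒴 m0 × 𝒵 m0) × YRest 𝒴 m0)) [IsFiniteMeasure μ],
      Integrable G μ := fun μ _ =>
    (integrable_const (1:ℝ)).mono' hGmeas.aestronglyMeasurable (ae_of_all _ hGbd)
  -- the integrand in Ω
  set fP : Ω → ℝ := fun ω => f (fun k => Y k ω) (Z m0 ω) with hfPdef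
  have hfPmeas : Measurable fP :=
    hfm.comp ((measurable_pi_lambda _ fun k => hY k).prodMk (hZ m0))
  have hfPint : Integrable fP P :=
    (integrable_const (1:ℝ)).mono' hfPmeas.aestronglyMeasurable (ae_of_all _ fun ω => hfb _ _)
  have hGU : ∀ ω, G (U ω, Yr ω) = fP ω := by
    intro ω; simp only [hGdef, hfPdef, hUdef]
    rw [hasm ω]
  -- the integrand on the (U, V)-product space
  set H : (𝒴 m0 × 𝒵 m0) × VType 𝒴 𝒵 M₀ m0 hm0 → ℝ :=
    fun p => G (p.1, extractY 𝒴 𝒵 M₀ m0 hm0 p.2) with hHdef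
  have hHmeas : Measurable H :=
    hGmeas.comp (measurable_fst.prodMk (hEY.comp measurable_snd))
  have hHint : ∀ (μ : Measure ((𝒴 m0 × 𝒵 m0) × VType 𝒴 𝒵 M₀ m0 hm0)) [IsFiniteMeasure μ],
      Integrable H μ := fun μ _ =>
    (integrable_const (1:ℝ)).mono' hHmeas.aestronglyMeasurable (ae_of_all _ fun p => hGbd _)
  have hHU : ∀ ω, H (U ω, V ω) = fP ω := by
    intro ω
    have : extractY 𝒴 𝒵 M₀ m0 hm0 (V ω) = Yr ω := by rw [hYrV]; rfl
    simp only [hHdef, this, hGU]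
  have hpairW : Measurable fun ω => (U ω, Yr ω) := hU.prodMk hYr
  have hpairV : Measurable fun ω => (U ω, V ω) := hU.prodMk hV
  have htotal : ∫ ω, fP ω ∂P = t := by
    have := hc univ MeasurableSet.univ
    simpa [Measure.restrict_univ, measure_univ] using this
  -- Claim B : for every measurable S the partial integral is a.e. constant
  have claimB : ∀ S : Set (𝒴 m0), MeasurableSet S →
      (fun w => ∫ u in S ×ˢ (univ : Set (𝒵 m0)), G (u, w) ∂μU) =ᵐ[μW]
      (fun _ => t * (μU (S ×ˢ (univ : Set (𝒵 m0)))).toReal) := by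
    intro S hS
    set c := t * (μU (S ×ˢ (univ : Set (𝒵 m0)))).toReal with hcdef
    set q : YRest 𝒴 m0 → ℝ :=
      fun w => ∫ u in S ×ˢ (univ : Set (𝒵 m0)), G (u, w) ∂μU with hqdef
    have hSu : MeasurableSet (S ×ˢ (univ : Set (𝒵 m0))) := hS.prod MeasurableSet.univ
    have hqsm : StronglyMeasurable q := hGmeas.stronglyMeasurable.integral_prod_left'
    have hqbd : ∀ w, |q w| ≤ 1 := by
      intro w
      have h1 : ‖∫ u in S ×ˢ (univ : Set (𝒵 m0)), G (u, w) ∂μU‖ ≤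
          1 * ((μU.restrict (S ×ˢ (univ : Set (𝒵 m0)))) univ).toReal :=
        norm_integral_le_of_norm_le_const (ae_of_all _ fun u => by
          simpa using hGbd (u, w))
      have h2 : ((μU.restrict (S ×ˢ (univ : Set (𝒵 m0)))) univ).toReal ≤ 1 := by
        rw [Measure.restrict_apply_univ]
        exact ENNReal.toReal_le_of_le_ofReal one_pos.le (by simpa using prob_le_one)
      calc |q w| ≤ 1 * ((μU.restrict (S ×ˢ (univ : Set (𝒵 m0)))) univ).toReal := h1
        _ ≤ 1 := by linarith
    have hqint : Integrable q μW :=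
      (integrable_const (1:ℝ)).mono' hqsm.aestronglyMeasurable (ae_of_all _ hqbd)
    apply ae_eq_of_forall_setIntegral_eq_of_sigmaFinite
    · exact fun s hs hμs => hqint.integrableOn
    · exact fun s hs hμs => (integrable_const c).integrableOn
    intro T' hT' hμT'
    have hD : MeasurableSet[MeasurableSpace.comap (fun ω (k : Fin M) => Y k ω) inferInstance]
        ((fun ω => (U ω, Yr ω)) ⁻¹' ((S ×ˢ (univ : Set (𝒵 m0))) ×ˢ T')) := by
      refine ⟨(fun y : ∀ k, 𝒴 k => y m0) ⁻¹' S ∩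
        (fun (y : ∀ k, 𝒴 k) (k : {k : Fin M // k ≠ m0}) => y k.1) ⁻¹' T', ?_, ?_⟩
      · exact ((measurable_pi_apply m0) hS).inter
          ((measurable_pi_lambda _ fun k => measurable_pi_apply k.1) hT')
      · ext ω
        simp [hUdef, hYrdef, Set.mem_prod]
    calc ∫ w in T', q w ∂μW
        = ∫ p in (S ×ˢ (univ : Set (𝒵 m0))) ×ˢ T', G p ∂(μU.prod μW) := by
          rw [← Measure.prod_restrict]
          exact (integral_prod_symm _ (hGint _)).symm
      _ = ∫ ω in (fun ω => (U ω, Yr ω)) ⁻¹' ((S ×ˢ (univ : Set (𝒵 m0))) ×ˢ T'), fP ω ∂P := by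
          rw [← hlawW, setIntegral_map (hSu.prod hT') hGmeas.aestronglyMeasurable
            hpairW.aemeasurable]
          simp only [hGU]
      _ = t * (P ((fun ω => (U ω, Yr ω)) ⁻¹' ((S ×ˢ (univ : Set (𝒵 m0))) ×ˢ T'))).toReal :=
          hc _ hD
      _ = t * ((μU (S ×ˢ (univ : Set (𝒵 m0)))).toReal * (μW T').toReal) := by
          rw [Set.mk_preimage_prod, hUYr.measure_inter_preimage_eq_mul _ _ hSu hT',
            ENNReal.toReal_mul, hmuU, hmuW, Measure.map_apply hU hSu, Measure.map_apply hYr hT']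
      _ = ∫ _ in T', c ∂μW := by
          rw [setIntegral_const, smul_eq_mul, measureReal_def, hcdef]; ring
  -- Claim C : the rectangle case on Ω
  set Φ : Ω → 𝒴 m0 × VType 𝒴 𝒵 M₀ m0 hm0 := fun ω => (Y m0 ω, V ω) with hΦdef
  have hΦmeas : Measurable Φ := (hY m0).prodMk hV
  have main : ∀ s : Set (𝒴 m0 × VType 𝒴 𝒵 M₀ m0 hm0),
      MeasurableSet[@Prod.instMeasurableSpace _ _ _ mV] s →
      ∫ ω in Φ ⁻¹' s, fP ω ∂P = t * (P (Φ ⁻¹' s)).toReal := by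
    have hgen : (@Prod.instMeasurableSpace (𝒴 m0) (VType 𝒴 𝒵 M₀ m0 hm0) _ mV) =
        MeasurableSpace.generateFrom
          (Set.image2 (· ×ˢ ·) { s : Set (𝒴 m0) | MeasurableSet s }
            { t : Set (VType 𝒴 𝒵 M₀ m0 hm0) | MeasurableSet[mV] t }) :=
      generateFrom_prod.symm
    refine MeasurableSpace.induction_on_inter hgen isPiSystem_prod ?_ ?_ ?_ ?_
    · simp
    · rintro _ ⟨S, hS, T, hT, rfl⟩
      replace hS : MeasurableSet S := hS
      replace hT : MeasurableSet[mV] T := hT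
      have hA : MeasurableSet (S ×ˢ (univ : Set (𝒵 m0))) := hS.prod MeasurableSet.univ
      have hae : ∀ᵐ v ∂μV, (∫ u in S ×ˢ (univ : Set (𝒵 m0)),
          G (u, extractY 𝒴 𝒵 M₀ m0 hm0 v) ∂μU) =
          t * (μU (S ×ˢ (univ : Set (𝒵 m0)))).toReal := by
        refine ae_of_ae_map (p := fun w => (∫ u in S ×ˢ (univ : Set (𝒵 m0)), G (u, w) ∂μU) =
          t * (μU (S ×ˢ (univ : Set (𝒵 m0)))).toReal) hEY.aemeasurable ?_
        rw [← hmuWV]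
        exact claimB S hS
      have hpre : Φ ⁻¹' (S ×ˢ T) =
          (fun ω => (U ω, V ω)) ⁻¹' ((S ×ˢ (univ : Set (𝒵 m0))) ×ˢ T) := by
        ext ω; simp [hΦdef, hUdef, Set.mem_prod]
      rw [hpre]
      calc ∫ ω in (fun ω => (U ω, V ω)) ⁻¹' ((S ×ˢ (univ : Set (𝒵 m0))) ×ˢ T), fP ω ∂P
          = ∫ p in (S ×ˢ (univ : Set (𝒵 m0))) ×ˢ T, H p ∂(μU.prod μV) := by
            rw [← hlawV, setIntegral_map (hA.prod hT) hHmeas.aestronglyMeasurable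
              hpairV.aemeasurable]
            simp only [hHU]
        _ = ∫ v in T, (∫ u in S ×ˢ (univ : Set (𝒵 m0)), H (u, v) ∂μU) ∂μV := by
            rw [← Measure.prod_restrict]
            exact integral_prod_symm _ (hHint _)
        _ = ∫ _ in T, (t * (μU (S ×ˢ (univ : Set (𝒵 m0)))).toReal) ∂μV := by
            refine setIntegral_congr_ae hT ?_
            filter_upwards [hae] with v hv _
            exact hv
        _ = t * (P ((fun ω => (U ω, V ω)) ⁻¹' ((S ×ˢ (univ : Set (𝒵 m0))) ×ˢ T))).toReal := by
            rw [setIntegral_const, smul_eq_mul, measureReal_def, Set.mk_preimage_prod,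
              hUV.measure_inter_preimage_eq_mul _ _ hA hT, ENNReal.toReal_mul,
              hmuU, hmuV, Measure.map_apply hU hA, Measure.map_apply hV hT]
            ring
    · intro s hs hCs
      have hps : MeasurableSet (Φ ⁻¹' s) := hΦmeas hs
      have hadd := integral_add_compl hps hfPint
      have hm1 : (P (Φ ⁻¹' s)).toReal + (P ((Φ ⁻¹' s)ᶜ)).toReal = 1 := by
        rw [← ENNReal.toReal_add (measure_ne_top _ _) (measure_ne_top _ _),
          measure_add_measure_compl hps, measure_univ, ENNReal.toReal_one]
      rw [Set.preimage_compl]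
      have h2 : (P ((Φ ⁻¹' s)ᶜ)).toReal = 1 - (P (Φ ⁻¹' s)).toReal := by linarith
      rw [h2]
      have h3 : ∫ ω in (Φ ⁻¹' s)ᶜ, fP ω ∂P = t - t * (P (Φ ⁻¹' s)).toReal := by
        rw [hCs] at hadd
        rw [htotal] at hadd
        linarith
      rw [h3]; ring
    · intro g hdisj hmeasg hCg
      rw [Set.preimage_iUnion]
      have hmg : ∀ i, MeasurableSet (Φ ⁻¹' g i) := fun i => hΦmeas (hmeasg i)
      have hdg : Pairwise (Function.onFun Disjoint fun i => Φ ⁻¹' g i) :=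
        fun i j hij => Disjoint.preimage Φ (hdisj hij)
      rw [integral_iUnion hmg hdg hfPint.integrableOn, measure_iUnion hdg hmg,
        ENNReal.tsum_toReal_eq (fun i => measure_ne_top _ _), ← tsum_mul_left]
      exact tsum_congr fun i => hCg i
  intro s hs
  exact main s hs

end Peel

section Identities

variable {Ω : Type*} {M : ℕ} {𝒴 𝒵 : Fin M → Type*} [∀ m, MeasurableSpace (𝒴 m)]
  [∀ m, MeasurableSpace (𝒵 m)]

lemma extractY_blockFun (M₀ : Finset (Fin M)) (m0 : Fin M) (hm0 : m0 ∈ M₀)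
    (Y : ∀ m, Ω → 𝒴 m) (Z : ∀ m, Ω → 𝒵 m) (ω : Ω) :
    extractY 𝒴 𝒵 M₀ m0 hm0 (fun j => blockFun M₀ Y Z j.1 ω) =
      fun k : {k : Fin M // k ≠ m0} => Y k.1 ω := by
  funext k
  by_cases hk : k.1 ∈ M₀ <;> simp [extractY, hk, blockFun]

lemma extractZ_blockFun (M₀ : Finset (Fin M)) (m0 : Fin M) (hm0 : m0 ∈ M₀)
    (j : Fin M) (hj : j ≠ m0) (Y : ∀ m, Ω → 𝒴 m) (Z : ∀ m, Ω → 𝒵 m) (ω : Ω) :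
    extractZ 𝒴 𝒵 M₀ m0 hm0 j hj (fun i => blockFun M₀ Y Z i.1 ω) = Z j ω := by
  by_cases hk : j ∈ M₀ <;> simp [extractZ, hk, blockFun]

lemma asmW_apply (m0 : Fin M) (Y : ∀ m, Ω → 𝒴 m) (ω : Ω) :
    asmW 𝒴 m0 (Y m0 ω) (fun k : {k : Fin M // k ≠ m0} => Y k.1 ω) = fun k => Y k ω := by
  funext k
  by_cases h : k = m0
  · subst h; rw [asmW, dif_pos rfl]; exact cast_eq _ _
  · rw [asmW, dif_neg h]

end Identities

/-- Under the block-independence condition and the conditional-size condition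
for the null indices `M₀`, the joint distribution of the p-value statistics factors into a
product of uniforms over `M₀` times the joint probability over `M₁ = M₀ᶜ`. -/
theorem pvalues_uniform_and_indep
    {Ω : Type*} [MeasurableSpace Ω] (P : Measure Ω) [IsProbabilityMeasure P]
    (M : ℕ) (𝒴 𝒵 : Fin M → Type*)
    [∀ m, MeasurableSpace (𝒴 m)] [∀ m, MeasurableSpace (𝒵 m)]
    (Y : ∀ m, Ω → 𝒴 m) (hY : ∀ m, Measurable (Y m))
    (Z : ∀ m, Ω → 𝒵 m) (hZ : ∀ m, Measurable (Z m))
    (M₀ : Finset (Fin M))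
    (δ : ∀ m, (∀ k, 𝒴 k) → 𝒵 m → ℝ → ℝ)
    (hδmeas : ∀ m, Measurable (fun p : (∀ k, 𝒴 k) × 𝒵 m × ℝ => δ m p.1 p.2.1 p.2.2))
    (hvals : ∀ m (y : ∀ k, 𝒴 k) (z : 𝒵 m), ∀ η ∈ Icc (0:ℝ) 1,
      δ m y z η = 0 ∨ δ m y z η = 1)
    (hreg : ∀ m, ∀ᵐ ω ∂P,
      MonotoneOn (δ m (fun k => Y k ω) (Z m ω)) (Icc (0:ℝ) 1) ∧
      (∀ η ∈ Ico (0:ℝ) 1,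
        ContinuousWithinAt (δ m (fun k => Y k ω) (Z m ω)) (Ici η) η) ∧
      δ m (fun k => Y k ω) (Z m ω) 1 = 1)
    (hindep : ProbabilityTheory.iIndepFun (m := blockMS 𝒴 𝒵 M₀) (blockFun M₀ Y Z) P)
    (hcond : ∀ m ∈ M₀, ∀ η ∈ Icc (0:ℝ) 1,
      P[fun ω => δ m (fun k => Y k ω) (Z m ω) η
        | MeasurableSpace.comap (fun ω (k : Fin M) => Y k ω) inferInstance]
        =ᵐ[P] fun _ => η) :
    ∀ t : Fin M → ℝ, (∀ m, t m ∈ Icc (0:ℝ) 1) →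
      P (⋂ m, {ω | pvalue2 (δ m) (fun k => Y k ω) (Z m ω) ≤ t m}) =
        (∏ m ∈ M₀, ENNReal.ofReal (t m)) *
          P (⋂ m ∈ M₀ᶜ, {ω | pvalue2 (δ m) (fun k => Y k ω) (Z m ω) ≤ t m}) := by

  classical
  intro t ht
  letI mB : ∀ i, MeasurableSpace (blockType 𝒴 𝒵 M₀ i) := blockMS 𝒴 𝒵 M₀
  set A : Fin M → Set Ω := fun m => {ω | δ m (fun k => Y k ω) (Z m ω) (t m) = 1} with hAdef
  have hδm : ∀ m (r : ℝ), Measurable fun ω => δ m (fun k => Y k ω) (Z m ω) r := fun m r =>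
    (hδmeas m).comp ((measurable_pi_lambda _ fun k => hY k).prodMk
      ((hZ m).prodMk measurable_const))
  have hAmeas : ∀ m, MeasurableSet (A m) := fun m =>
    (hδm m (t m)) (measurableSet_singleton 1)
  -- a.e. identification of the p-value events
  have haeA : ∀ m, {ω | pvalue2 (δ m) (fun k => Y k ω) (Z m ω) ≤ t m} =ᵐ[P] A m := by
    intro m
    rw [Filter.eventuallyEq_set]
    filter_upwards [hreg m] with ω hω
    exact pvalue_le_iff _ (ht m) (hvals m _ _) hω.1 hω.2.1 hω.2.2
  have haeInterAll :
      P (⋂ m, {ω | pvalue2 (δ m) (fun k => Y k ω) (Z m ω) ≤ t m}) = P (⋂ m, A m) := by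
    apply measure_congr
    rw [Filter.eventuallyEq_set]
    filter_upwards [ae_all_iff.mpr fun m => Filter.eventuallyEq_set.mp (haeA m)] with ω hω
    simp only [Set.mem_iInter]
    exact forall_congr' fun m => hω m
  have haeInterC :
      P (⋂ m ∈ M₀ᶜ, {ω | pvalue2 (δ m) (fun k => Y k ω) (Z m ω) ≤ t m}) =
        P (⋂ m ∈ M₀ᶜ, A m) := by
    apply measure_congr
    rw [Filter.eventuallyEq_set]
    filter_upwards [ae_all_iff.mpr fun m => Filter.eventuallyEq_set.mp (haeA m)] with ω hω
    simp only [Set.mem_iInter]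
    exact forall_congr' fun m => forall_congr' fun _ => hω m
  rw [haeInterAll, haeInterC]
  set B : Set Ω := ⋂ m ∈ M₀ᶜ, A m with hBdef
  have hsplit : (⋂ m, A m) = (⋂ m ∈ (M₀ : Finset (Fin M)), A m) ∩ B := by
    ext ω
    simp only [Set.mem_iInter, Set.mem_inter_iff, hBdef, Finset.mem_compl]
    constructor
    · exact fun h => ⟨fun m _ => h m, fun m _ => h m⟩
    · intro h m
      by_cases hm : m ∈ M₀
      · exact h.1 m hm
      · exact h.2 m hm
  rw [hsplit]
  -- conditional size in set-integral form
  have hle : MeasurableSpace.comap (fun ω (k : Fin M) => Y k ω) inferInstance ≤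
      (inferInstance : MeasurableSpace Ω) :=
    (measurable_pi_lambda _ fun k => hY k).comap_le
  have hδbd : ∀ m ω, |δ m (fun k => Y k ω) (Z m ω) (t m)| ≤ 1 := by
    intro m ω
    rcases hvals m (fun k => Y k ω) (Z m ω) (t m) (ht m) with h | h <;> rw [h] <;> norm_num
  have hc : ∀ m, m ∈ M₀ → ∀ D : Set Ω,
      MeasurableSet[MeasurableSpace.comap (fun ω (k : Fin M) => Y k ω) inferInstance] D →
      ∫ ω in D, δ m (fun k => Y k ω) (Z m ω) (t m) ∂P = t m * (P D).toReal := by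
    intro m hm D hD
    have hint : Integrable (fun ω => δ m (fun k => Y k ω) (Z m ω) (t m)) P :=
      (integrable_const (1:ℝ)).mono' (hδm m (t m)).aestronglyMeasurable
        (ae_of_all _ fun ω => hδbd m ω)
    have h1 := (setIntegral_condExp hle hint hD).symm
    have h2 : ∫ ω in D, (P[fun ω => δ m (fun k => Y k ω) (Z m ω) (t m)
        | MeasurableSpace.comap (fun ω (k : Fin M) => Y k ω) inferInstance]) ω ∂P =
        ∫ _ in D, t m ∂P :=
      setIntegral_congr_ae (hle D hD)
        ((hcond m hm (t m) (ht m)).mono fun ω hω _ => hω)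
    rw [h1, h2, setIntegral_const, smul_eq_mul, measureReal_def, mul_comm]
  -- induction over the null indices
  have key : ∀ s : Finset (Fin M), s ⊆ M₀ →
      P ((⋂ m ∈ s, A m) ∩ B) = (∏ m ∈ s, ENNReal.ofReal (t m)) * P B := by
    intro s
    induction s using Finset.induction_on with
    | empty => intro _; simp
    | @insert a s ha ih =>
      intro hsub
      have haM₀ : a ∈ M₀ := hsub (Finset.mem_insert_self a s)
      have hsM₀ : s ⊆ M₀ := fun x hx => hsub (Finset.mem_insert_of_mem hx)
      letI mV : MeasurableSpace (VType 𝒴 𝒵 M₀ a haM₀) := VMS 𝒴 𝒵 M₀ a haM₀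
      have hEY := extractY_measurable 𝒴 𝒵 M₀ a haM₀
      set Φ : Ω → 𝒴 a × VType 𝒴 𝒵 M₀ a haM₀ :=
        fun ω => (Y a ω, fun j => blockFun M₀ Y Z j.1 ω) with hΦdef
      set SS : Fin M → Set (𝒴 a × VType 𝒴 𝒵 M₀ a haM₀) := fun j =>
        if hj : j = a then univ else
          {p | δ j (asmW 𝒴 a p.1 (extractY 𝒴 𝒵 M₀ a haM₀ p.2))
            (extractZ 𝒴 𝒵 M₀ a haM₀ j hj p.2) (t j) = 1} with hSSdef
      have hSSmeas : ∀ j, MeasurableSet (SS j) := by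
        intro j
        rw [hSSdef]
        by_cases hj : j = a
        · simp only [dif_pos hj]; exact MeasurableSet.univ
        · simp only [dif_neg hj]
          have hmeas : Measurable fun p : 𝒴 a × VType 𝒴 𝒵 M₀ a haM₀ =>
              δ j (asmW 𝒴 a p.1 (extractY 𝒴 𝒵 M₀ a haM₀ p.2))
                (extractZ 𝒴 𝒵 M₀ a haM₀ j hj p.2) (t j) :=
            (hδmeas j).comp
              (((asmW_measurable 𝒴 a).comp (measurable_fst.prodMk
                  (hEY.comp measurable_snd))).prodMk
                (((extractZ_measurable 𝒴 𝒵 M₀ a haM₀ j hj).comp measurable_snd).prodMk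
                  measurable_const))
          exact hmeas (measurableSet_singleton 1)
      have hSSpre : ∀ j, j ≠ a → Φ ⁻¹' (SS j) = A j := by
        intro j hj
        rw [hSSdef]
        simp only [dif_neg hj]
        ext ω
        simp only [Set.mem_preimage, Set.mem_setOf_eq, hΦdef, hAdef]
        rw [extractY_blockFun M₀ a haM₀ Y Z ω, extractZ_blockFun M₀ a haM₀ j hj Y Z ω,
          asmW_apply a Y ω]
      set C : Set (𝒴 a × VType 𝒴 𝒵 M₀ a haM₀) :=
        (⋂ j ∈ s, SS j) ∩ ⋂ j ∈ M₀ᶜ, SS j with hCdef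
      have hCmeas : MeasurableSet C := by
        rw [hCdef]
        exact ((s.measurableSet_biInter fun j _ => hSSmeas j).inter
          ((M₀ᶜ).measurableSet_biInter fun j _ => hSSmeas j))
      have hCpre : Φ ⁻¹' C = (⋂ m ∈ s, A m) ∩ B := by
        rw [hCdef, Set.preimage_inter]
        congr 1
        · rw [Set.preimage_iInter₂]
          exact Set.iInter₂_congr fun j hj => hSSpre j (fun h => ha (h ▸ hj))
        · rw [hBdef, Set.preimage_iInter₂]
          exact Set.iInter₂_congr fun j hj =>
            hSSpre j (fun h => (Finset.mem_compl.mp hj) (h ▸ haM₀))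
      have hfm : Measurable fun p : (∀ k, 𝒴 k) × 𝒵 a => δ a p.1 p.2 (t a) :=
        (hδmeas a).comp ((measurable_fst).prodMk ((measurable_snd).prodMk measurable_const))
      have hfb : ∀ (y : ∀ k, 𝒴 k) (z : 𝒵 a), |δ a y z (t a)| ≤ 1 := by
        intro y z
        rcases hvals a y z (t a) (ht a) with h | h <;> rw [h] <;> norm_num
      have hpeel := peel P Y hY Z hZ M₀ hindep a haM₀ (fun y z => δ a y z (t a))
        hfm hfb (t a) (hc a haM₀) C hCmeas
      rw [← hΦdef] at hpeel
      -- identify the set integral with a probability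
      have hind : (fun ω => δ a (fun k => Y k ω) (Z a ω) (t a)) =
          (A a).indicator (fun _ => (1:ℝ)) := by
        funext ω
        by_cases h : ω ∈ A a
        · rw [Set.indicator_of_mem h]; exact h
        · rw [Set.indicator_of_notMem h]
          rcases hvals a (fun k => Y k ω) (Z a ω) (t a) (ht a) with h0 | h1
          · exact h0
          · exact absurd h1 h
      have hPC : ∫ ω in Φ ⁻¹' C, δ a (fun k => Y k ω) (Z a ω) (t a) ∂P =
          (P (A a ∩ Φ ⁻¹' C)).toReal := by
        rw [hind, integral_indicator_const (1:ℝ) (hAmeas a),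
          measureReal_def, Measure.restrict_apply (hAmeas a), smul_eq_mul, mul_one]
      have hreal : (P (A a ∩ Φ ⁻¹' C)).toReal = t a * (P (Φ ⁻¹' C)).toReal := by
        rw [← hPC]; exact hpeel
      have hEN : P (A a ∩ Φ ⁻¹' C) = ENNReal.ofReal (t a) * P (Φ ⁻¹' C) := by
        have h4 := congrArg ENNReal.ofReal hreal
        rwa [ENNReal.ofReal_toReal (measure_ne_top _ _), ENNReal.ofReal_mul (ht a).1,
          ENNReal.ofReal_toReal (measure_ne_top _ _)] at h4
      rw [Finset.set_biInter_insert, Set.inter_assoc, ← hCpre, hEN, hCpre,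
        Finset.prod_insert ha, ih hsM₀, mul_assoc]
  exact key M₀ subset_rfl
end

section
/- Let (Ω, 𝒜, P) be a probability space, let Z : Ω → ℝ be a random variable whose law is the standard normal distribution, and let H : Ω → ℝ be a random variable with values in [0,1] that is independent of Z. Then for every t ∈ [0,1], P({Φ(Z) ≤ t·H} ∪ {1 − Φ(Z) ≤ t·(1 − H)}) = t. -/
open Set MeasureTheory ProbabilityTheory

noncomputable def Phi (x : ℝ) : ℝ :=
  ((ProbabilityTheory.gaussianReal 0 1) (Set.Iic x)).toReal

section PhiProps

lemma Phi_eq_integral (x : ℝ) :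
    Phi x = ∫ t in Set.Iic x, gaussianPDFReal 0 1 t := by
  rw [Phi, gaussianReal_apply_eq_integral 0 one_ne_zero (Set.Iic x),
    ENNReal.toReal_ofReal]
  exact setIntegral_nonneg measurableSet_Iic fun t _ => gaussianPDFReal_nonneg 0 1 t

lemma Phi_sub (x y : ℝ) (hxy : x ≤ y) :
    Phi y - Phi x = ∫ t in x..y, gaussianPDFReal 0 1 t := by
  rw [Phi_eq_integral, Phi_eq_integral, intervalIntegral.integral_of_le hxy]
  have h : ∫ t in Set.Iic x ∪ Set.Ioc x y, gaussianPDFReal 0 1 t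
      = (∫ t in Set.Iic x, gaussianPDFReal 0 1 t) + ∫ t in Set.Ioc x y, gaussianPDFReal 0 1 t :=
    setIntegral_union (Set.Iic_disjoint_Ioc le_rfl) measurableSet_Ioc
      ((integrable_gaussianPDFReal 0 1).integrableOn) ((integrable_gaussianPDFReal 0 1).integrableOn)
  rw [Set.Iic_union_Ioc_eq_Iic hxy] at h
  linarith

lemma Phi_strictMono : StrictMono Phi := by
  intro x y hxy
  have h := Phi_sub x y hxy.le
  have hpos : 0 < ∫ t in x..y, gaussianPDFReal 0 1 t :=
    intervalIntegral.intervalIntegral_pos_of_pos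
      ((integrable_gaussianPDFReal 0 1).intervalIntegrable)
      (fun t => gaussianPDFReal_pos 0 1 t one_ne_zero) hxy
  linarith

lemma Phi_continuous : Continuous Phi := by
  have h : ∀ y, Phi y = Phi 0 + ∫ t in (0:ℝ)..y, gaussianPDFReal 0 1 t := by
    intro y
    rcases le_total (0:ℝ) y with h0 | h0
    · have := Phi_sub 0 y h0; linarith
    · have := Phi_sub y 0 h0
      rw [intervalIntegral.integral_symm]
      linarith
  have : Phi = fun y => Phi 0 + ∫ t in (0:ℝ)..y, gaussianPDFReal 0 1 t := funext h
  rw [this]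
  exact continuous_const.add
    (intervalIntegral.continuous_primitive
      (fun a b => (integrable_gaussianPDFReal 0 1).intervalIntegrable) 0)

lemma Phi_eq_cdf (x : ℝ) : Phi x = cdf (gaussianReal 0 1) x :=
  (cdf_eq_real _ x).symm

lemma Phi_nonneg (x : ℝ) : 0 ≤ Phi x := ENNReal.toReal_nonneg

lemma Phi_le_one (x : ℝ) : Phi x ≤ 1 := by
  rw [Phi]
  have h : (gaussianReal 0 1) (Set.Iic x) ≤ 1 := prob_le_one
  simpa using ENNReal.toReal_mono ENNReal.one_ne_top h

lemma Phi_pos (x : ℝ) : 0 < Phi x := by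
  have h := Phi_sub (x - 1) x (by linarith)
  have hpos : 0 < ∫ t in (x-1)..x, gaussianPDFReal 0 1 t :=
    intervalIntegral.intervalIntegral_pos_of_pos
      ((integrable_gaussianPDFReal 0 1).intervalIntegrable)
      (fun t => gaussianPDFReal_pos 0 1 t one_ne_zero) (by linarith)
  have := Phi_nonneg (x - 1)
  linarith

lemma Phi_lt_one (x : ℝ) : Phi x < 1 :=
  lt_of_lt_of_le (Phi_strictMono (lt_add_one x)) (Phi_le_one (x + 1))

lemma Phi_tendsto_atBot : Filter.Tendsto Phi Filter.atBot (nhds 0) := by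
  have := tendsto_cdf_atBot (gaussianReal 0 1)
  exact this.congr fun x => (Phi_eq_cdf x).symm

lemma Phi_tendsto_atTop : Filter.Tendsto Phi Filter.atTop (nhds 1) := by
  have := tendsto_cdf_atTop (gaussianReal 0 1)
  exact this.congr fun x => (Phi_eq_cdf x).symm

lemma Phi_surj {a : ℝ} (h0 : 0 < a) (h1 : a < 1) : ∃ x, Phi x = a := by
  obtain ⟨x, hx⟩ : ∃ x, Phi x < a := (Phi_tendsto_atBot.eventually_lt_const h0).exists
  obtain ⟨y, hy⟩ : ∃ y, a < Phi y := (Phi_tendsto_atTop.eventually_const_lt h1).exists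
  have hxy : x ≤ y := by
    by_contra h
    exact absurd (Phi_strictMono.monotone (le_of_not_ge h)) (by linarith)
  obtain ⟨z, _, hz⟩ := intermediate_value_Icc hxy Phi_continuous.continuousOn
    (Set.mem_Icc.2 ⟨hx.le, hy.le⟩)
  exact ⟨z, hz⟩

lemma gauss_Iic (x : ℝ) : gaussianReal 0 1 (Set.Iic x) = ENNReal.ofReal (Phi x) := by
  rw [Phi, ENNReal.ofReal_toReal (measure_ne_top _ _)]

lemma gauss_singleton (x : ℝ) : gaussianReal 0 1 {x} = 0 :=
  gaussianReal_absolutelyContinuous 0 one_ne_zero (Real.volume_singleton)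

lemma gauss_Iio (x : ℝ) : gaussianReal 0 1 (Set.Iio x) = ENNReal.ofReal (Phi x) := by
  have h : gaussianReal 0 1 (Set.Iic x) = gaussianReal 0 1 (Set.Iio x) := by
    have heq : Set.Iic x = Set.Iio x ∪ {x} := by
      ext z
      simp [le_iff_lt_or_eq]
    rw [heq, measure_union (by simp) (measurableSet_singleton x), gauss_singleton, add_zero]
  rw [← h, gauss_Iic]

lemma gauss_setA {a : ℝ} (h0 : 0 ≤ a) (h1 : a ≤ 1) :
    gaussianReal 0 1 {z | Phi z ≤ a} = ENNReal.ofReal a := by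
  rcases eq_or_lt_of_le h0 with rfl | h0'
  · have : {z : ℝ | Phi z ≤ 0} = ∅ := by
      ext z; simp [not_le.2 (Phi_pos z)]
    simp [this]
  rcases eq_or_lt_of_le h1 with rfl | h1'
  · have : {z : ℝ | Phi z ≤ 1} = Set.univ := by
      ext z; simp [Phi_le_one z]
    simp [this]
  obtain ⟨x, hx⟩ := Phi_surj h0' h1'
  have : {z : ℝ | Phi z ≤ a} = Set.Iic x := by
    ext z
    simp only [Set.mem_setOf_eq, Set.mem_Iic, ← hx]
    exact ⟨fun h => Phi_strictMono.le_iff_le.mp h, fun h => Phi_strictMono.monotone h⟩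
  rw [this, gauss_Iic, hx]

lemma gauss_setB {b : ℝ} (h0 : 0 ≤ b) (h1 : b ≤ 1) :
    gaussianReal 0 1 {z | 1 - Phi z ≤ b} = ENNReal.ofReal b := by
  have hset : {z : ℝ | 1 - Phi z ≤ b} = {z : ℝ | 1 - b ≤ Phi z} := by
    ext z; simp only [Set.mem_setOf_eq]; constructor <;> intro h <;> linarith
  rcases eq_or_lt_of_le h0 with rfl | h0'
  · have : {z : ℝ | (1:ℝ) - 0 ≤ Phi z} = ∅ := by
      ext z
      simp only [Set.mem_setOf_eq, Set.mem_empty_iff_false, iff_false, not_le, sub_zero]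
      exact Phi_lt_one z
    rw [hset, this]; simp
  rcases eq_or_lt_of_le h1 with rfl | h1'
  · have : {z : ℝ | (1:ℝ) - 1 ≤ Phi z} = Set.univ := by
      ext z; simp [(Phi_pos z).le]
    rw [hset, this]; simp
  obtain ⟨x, hx⟩ := Phi_surj (show (0:ℝ) < 1 - b by linarith) (by linarith)
  have hIci : {z : ℝ | 1 - b ≤ Phi z} = Set.Ici x := by
    ext z
    simp only [Set.mem_setOf_eq, Set.mem_Ici, ← hx]
    exact ⟨fun h => Phi_strictMono.le_iff_le.mp h, fun h => Phi_strictMono.monotone h⟩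
  rw [hset, hIci, ← Set.compl_Iio, measure_compl measurableSet_Iio (measure_ne_top _ _),
    gauss_Iio, hx, measure_univ]
  rw [← ENNReal.ofReal_one, ← ENNReal.ofReal_sub 1 (by linarith)]
  norm_num

lemma Phi_measurable : Measurable Phi := Phi_continuous.measurable

lemma gauss_union {a b : ℝ} (ha : 0 ≤ a) (hb : 0 ≤ b) (hab : a + b ≤ 1) :
    gaussianReal 0 1 ({z | Phi z ≤ a} ∪ {z | 1 - Phi z ≤ b}) =
      ENNReal.ofReal (a + b) := by
  have hmB : MeasurableSet {z : ℝ | 1 - Phi z ≤ b} :=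
    measurableSet_le (measurable_const.sub Phi_measurable) measurable_const
  have hnull : gaussianReal 0 1 ({z | Phi z ≤ a} ∩ {z | 1 - Phi z ≤ b}) = 0 := by
    rcases lt_or_eq_of_le hab with h | h
    · have : {z : ℝ | Phi z ≤ a} ∩ {z | 1 - Phi z ≤ b} = ∅ := by
        ext z
        simp only [Set.mem_inter_iff, Set.mem_setOf_eq, Set.mem_empty_iff_false, iff_false,
          not_and]
        intro h1 h2; linarith
      rw [this]; exact measure_empty
    · have hsub : {z : ℝ | Phi z ≤ a} ∩ {z | 1 - Phi z ≤ b} ⊆ {z : ℝ | Phi z = a} := by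
        intro z ⟨h1, h2⟩
        simp only [Set.mem_setOf_eq] at *
        linarith
      refine measure_mono_null hsub ?_
      rcases eq_or_lt_of_le ha with rfl | ha'
      · have : {z : ℝ | Phi z = 0} = ∅ := by
          ext z; simp [ne_of_gt (Phi_pos z)]
        simp [this]
      rcases eq_or_lt_of_le (show a ≤ 1 by linarith) with rfl | ha1
      · have : {z : ℝ | Phi z = 1} = ∅ := by
          ext z; simp [ne_of_lt (Phi_lt_one z)]
        simp [this]
      obtain ⟨x, hx⟩ := Phi_surj ha' ha1
      have : {z : ℝ | Phi z = a} = {x} := by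
        ext z
        simp only [Set.mem_setOf_eq, Set.mem_singleton_iff, ← hx]
        exact ⟨fun h => Phi_strictMono.injective h, fun h => by rw [h]⟩
      rw [this]; exact gauss_singleton x
  rw [measure_union₀ hmB.nullMeasurableSet hnull, gauss_setA ha (by linarith),
    gauss_setB hb (by linarith), ENNReal.ofReal_add ha hb]

end PhiProps

/-- If `Z` is standard normal and `H ∈ [0,1]` is independent of `Z`, then for
every `t ∈ [0,1]`, `P(Φ(Z) ≤ t·H or 1 − Φ(Z) ≤ t·(1 − H)) = t`. -/
theorem weighted_twoSided_event_uniform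
    {Ω : Type*} [MeasurableSpace Ω] (P : Measure Ω) [IsProbabilityMeasure P]
    (Z : Ω → ℝ) (hZ : Measurable Z) (hZlaw : P.map Z = gaussianReal 0 1)
    (H : Ω → ℝ) (hH : Measurable H) (hHvals : ∀ ω, H ω ∈ Icc (0:ℝ) 1)
    (hindep : IndepFun Z H P) :
    ∀ t ∈ Icc (0:ℝ) 1,
      P ({ω | Phi (Z ω) ≤ t * H ω} ∪ {ω | 1 - Phi (Z ω) ≤ t * (1 - H ω)}) =
        ENNReal.ofReal t := by
  intro t ht
  obtain ⟨ht0, ht1⟩ := ht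
  set S : Set (ℝ × ℝ) :=
    {p : ℝ × ℝ | Phi p.1 ≤ t * p.2} ∪ {p : ℝ × ℝ | 1 - Phi p.1 ≤ t * (1 - p.2)} with hS
  have hSm : MeasurableSet S := by
    apply MeasurableSet.union
    · exact measurableSet_le (Phi_measurable.comp measurable_fst)
        (measurable_const.mul measurable_snd)
    · exact measurableSet_le
        (measurable_const.sub (Phi_measurable.comp measurable_fst))
        (measurable_const.mul (measurable_const.sub measurable_snd))
  have hmap : P.map (fun ω => (Z ω, H ω)) = (P.map Z).prod (P.map H) :=
    (indepFun_iff_map_prod_eq_prod_map_map hZ.aemeasurable hH.aemeasurable).mp hindep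
  have hpre : ({ω | Phi (Z ω) ≤ t * H ω} ∪ {ω | 1 - Phi (Z ω) ≤ t * (1 - H ω)})
      = (fun ω => (Z ω, H ω)) ⁻¹' S := by
    ext ω; simp [hS]
  rw [hpre, ← Measure.map_apply (hZ.prodMk hH) hSm, hmap, hZlaw]
  have : IsProbabilityMeasure (P.map H) := Measure.isProbabilityMeasure_map hH.aemeasurable
  rw [Measure.prod_apply_symm hSm]
  have hae : ∀ᵐ h ∂(P.map H), h ∈ Icc (0:ℝ) 1 := by
    exact (MeasureTheory.ae_map_iff hH.aemeasurable measurableSet_Icc).mpr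
      (Filter.Eventually.of_forall hHvals)
  have hinner : ∀ᵐ h ∂(P.map H),
      (gaussianReal 0 1) ((fun z => (z, h)) ⁻¹' S) = ENNReal.ofReal t := by
    filter_upwards [hae] with h hh
    obtain ⟨hh0, hh1⟩ := hh
    have hpre2 : (fun z => (z, h)) ⁻¹' S
        = {z | Phi z ≤ t * h} ∪ {z | 1 - Phi z ≤ t * (1 - h)} := by
      ext z; simp [hS]
    rw [hpre2, gauss_union (by positivity) (by nlinarith) (by nlinarith)]
    congr 1
    ring
  rw [lintegral_congr_ae hinner, lintegral_const, measure_univ, mul_one]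
end

section
/- Two-group model: fix p ∈ (0,1], θ ≠ 0, λ ∈ (0,1], and ε > 0, and let (J_m)_{m≥1} be i.i.d. Bernoulli(p) random variables and (ξ_m)_{m≥1} i.i.d. standard normal random variables independent of the J's; set Y_m = λ²θJ_m + λξ_m. Define A = Φ(ε/λ) − Φ(−ε/λ), B = Φ((ε − λ²θ)/λ) − Φ((−ε − λ²θ)/λ), p* = p(1 − B/A), and p̂_M = 1 − (1/(M·A))·Σ_{m=1}^M 1{−ε ≤ Y_m ≤ ε}. Then 0 < p* < p, and p̂_M converges in probability to p* as M → ∞. -/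
open Set MeasureTheory ProbabilityTheory

open intervalIntegral
open scoped ENNReal

noncomputable def gpdf : ℝ → ℝ := gaussianPDFReal 0 1

lemma gpdf_pos (x : ℝ) : 0 < gpdf x := gaussianPDFReal_pos 0 1 x one_ne_zero

lemma gpdf_cont : Continuous gpdf := by
  unfold gpdf
  rw [gaussianPDFReal_def]
  fun_prop

lemma gpdf_eq (x : ℝ) : gpdf x = (Real.sqrt (2 * Real.pi))⁻¹ * Real.exp (- x ^ 2 / 2) := by
  unfold gpdf
  rw [gaussianPDFReal_def]
  norm_num

lemma gpdf_even (x : ℝ) : gpdf (-x) = gpdf x := by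
  rw [gpdf_eq, gpdf_eq]; ring_nf

lemma gpdf_lt {x y : ℝ} (h : x ^ 2 < y ^ 2) : gpdf y < gpdf x := by
  rw [gpdf_eq, gpdf_eq]
  have h0 : (0:ℝ) < (Real.sqrt (2 * Real.pi))⁻¹ := by
    positivity
  have := Real.exp_lt_exp.2 (show -y^2/2 < -x^2/2 by linarith)
  nlinarith [Real.exp_pos (-y^2/2)]

lemma gpdf_intInt (a b : ℝ) : IntervalIntegrable gpdf volume a b :=
  gpdf_cont.intervalIntegrable a b

instance : MeasureTheory.NullSingletonClass (gaussianReal 0 1) :=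
  ⟨fun x => (gaussianReal_absolutelyContinuous 0 one_ne_zero) (measure_singleton x)⟩

lemma nu_Ioc (a b : ℝ) (h : a ≤ b) :
    (gaussianReal 0 1) (Ioc a b) = ENNReal.ofReal (∫ x in a..b, gpdf x) := by
  rw [gaussianReal_apply_eq_integral 0 one_ne_zero, intervalIntegral.integral_of_le h]
  rfl

lemma Phi_sub_integral (a b : ℝ) (h : a ≤ b) :
    Phi b - Phi a = ∫ x in a..b, gpdf x := by
  have hsplit : (gaussianReal 0 1) (Iic a) + (gaussianReal 0 1) (Ioc a b)
      = (gaussianReal 0 1) (Iic b) := by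
    rw [← measure_union (by rw [Set.disjoint_left]; intro x hx hx2; exact absurd hx2.1 (not_lt.2 hx)) measurableSet_Ioc, Iic_union_Ioc_eq_Iic h]
  have hfin : ∀ s : Set ℝ, (gaussianReal 0 1) s ≠ ⊤ := fun s => measure_ne_top _ s
  have := congrArg ENNReal.toReal hsplit
  rw [ENNReal.toReal_add (hfin _) (hfin _)] at this
  unfold Phi
  rw [← this, nu_Ioc a b h, ENNReal.toReal_ofReal]
  · ring
  · exact intervalIntegral.integral_nonneg h (fun x _ => (gpdf_pos x).le)

lemma nu_Icc (a b : ℝ) (h : a ≤ b) :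
    (gaussianReal 0 1) (Icc a b) = ENNReal.ofReal (Phi b - Phi a) := by
  rw [measure_congr ((Ioc_ae_eq_Icc (μ := gaussianReal 0 1) (a:=a) (b:=b)).symm), nu_Ioc a b h,
    Phi_sub_integral a b h]

lemma key_pos (a c : ℝ) (ha : 0 < a) (hc : 0 < c) :
    (∫ x in (-a-c)..(a-c), gpdf x) < ∫ x in (-a)..a, gpdf x := by
  rcases lt_or_ge c (2*a) with hc2 | hc2
  · -- c < 2a
    have h1 : (∫ x in (-a-c)..(a-c), gpdf x)
        = (∫ x in (-a-c)..(-a), gpdf x) + ∫ x in (-a)..(a-c), gpdf x :=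
      (intervalIntegral.integral_add_adjacent_intervals (gpdf_intInt _ _) (gpdf_intInt _ _)).symm
    have h2 : (∫ x in (-a)..a, gpdf x)
        = (∫ x in (-a)..(a-c), gpdf x) + ∫ x in (a-c)..a, gpdf x :=
      (intervalIntegral.integral_add_adjacent_intervals (gpdf_intInt _ _) (gpdf_intInt _ _)).symm
    rw [h1, h2]
    have h3 : (∫ x in (-a-c)..(-a), gpdf x) = ∫ x in a..(a+c), gpdf x := by
      have := intervalIntegral.integral_comp_neg (a := a) (b := a + c) gpdf
      simp only [gpdf_even] at this
      rw [this]
      congr 1 <;> ring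
    have h4 : (∫ x in a..(a+c), gpdf x) = ∫ x in (a-c)..a, gpdf (x + c) := by
      rw [intervalIntegral.integral_comp_add_right gpdf c]
      norm_num
    have hcont : Continuous fun x : ℝ => gpdf (x + c) :=
      gpdf_cont.comp (continuous_add_right c)
    have h5 : (∫ x in (a-c)..a, gpdf (x + c)) < ∫ x in (a-c)..a, gpdf x := by
      have hpos : 0 < ∫ x in (a-c)..a, (gpdf x - gpdf (x + c)) := by
        apply intervalIntegral_pos_of_pos_on
        · exact (gpdf_intInt _ _).sub (hcont.intervalIntegrable _ _)
        · intro x hx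
          have : x ^ 2 < (x + c) ^ 2 := by nlinarith [hx.1]
          linarith [gpdf_lt this]
        · linarith
      have heq := intervalIntegral.integral_sub (f := gpdf)
        (g := fun x => gpdf (x + c)) (gpdf_intInt (a-c) a)
        (hcont.intervalIntegrable _ _)
      rw [heq] at hpos
      linarith
    linarith [h3, h4, h5]
  · -- 2a ≤ c
    have h1 : (∫ x in (-a-c)..(a-c), gpdf x) = ∫ x in (-a)..a, gpdf (x - c) := by
      rw [intervalIntegral.integral_comp_sub_right gpdf c]
    have hcont : Continuous fun x : ℝ => gpdf (x - c) :=
      gpdf_cont.comp (continuous_sub_right c)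
    have hpos : 0 < ∫ x in (-a)..a, (gpdf x - gpdf (x - c)) := by
      apply intervalIntegral_pos_of_pos_on
      · exact (gpdf_intInt _ _).sub (hcont.intervalIntegrable _ _)
      · intro x hx
        have : x ^ 2 < (x - c) ^ 2 := by nlinarith [hx.2]
        linarith [gpdf_lt this]
      · linarith
    have heq := intervalIntegral.integral_sub (f := gpdf)
      (g := fun x => gpdf (x - c)) (gpdf_intInt (-a) a)
      (hcont.intervalIntegrable _ _)
    rw [heq] at hpos
    linarith [h1]

lemma key_ne (a c : ℝ) (ha : 0 < a) (hc : c ≠ 0) :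
    Phi (a - c) - Phi (-a - c) < Phi a - Phi (-a) := by
  have hle : -a - c ≤ a - c := by linarith
  rw [Phi_sub_integral _ _ hle, Phi_sub_integral (-a) a (by linarith)]
  rcases hc.lt_or_gt with h | h
  · have hsym : (∫ x in (-a-c)..(a-c), gpdf x) = ∫ x in (-a-(-c))..(a-(-c)), gpdf x := by
      have := intervalIntegral.integral_comp_neg (a := -a + c) (b := a + c) gpdf
      simp only [gpdf_even] at this
      rw [show (-a-(-c) : ℝ) = -a + c by ring, show (a-(-c) : ℝ) = a + c by ring, this]
      congr 1 <;> ring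
    rw [hsym]
    exact key_pos a (-c) ha (by linarith)
  · exact key_pos a c ha h

lemma Phi_lt_Phi {a b : ℝ} (h : a < b) : Phi a < Phi b := by
  have := Phi_sub_integral a b h.le
  have hpos : 0 < ∫ x in a..b, gpdf x :=
    intervalIntegral_pos_of_pos (gpdf_intInt a b) gpdf_pos h
  linarith

lemma bernoulli_map {Ω : Type*} [MeasurableSpace Ω] (P : Measure Ω) [IsProbabilityMeasure P]
    (g : Ω → ℝ) (hg : Measurable g) (hvals : ∀ ω, g ω = 0 ∨ g ω = 1) {q : ℝ≥0∞} (hq : q ≤ 1)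
    (hlaw : P (g ⁻¹' {1}) = q) :
    P.map g = (1 - q) • Measure.dirac 0 + q • Measure.dirac 1 := by
  have h0law : P (g ⁻¹' {0}) = 1 - q := by
    have hset : g ⁻¹' {(0:ℝ)} = (g ⁻¹' {1})ᶜ := by
      ext ω; rcases hvals ω with h | h <;> simp [h]
    rw [hset, measure_compl (hg (measurableSet_singleton 1)) (measure_ne_top _ _),
      measure_univ, hlaw]
  ext s hs
  rw [Measure.map_apply hg hs]
  have hrhs : ((1 - q) • Measure.dirac (0:ℝ) + q • Measure.dirac 1 : Measure ℝ) s
      = (1 - q) * s.indicator 1 0 + q * s.indicator 1 1 := by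
    simp [Measure.dirac_apply' _ hs]
  by_cases h1s : (1:ℝ) ∈ s <;> by_cases h0s : (0:ℝ) ∈ s
  · have hset : g ⁻¹' s = univ := by
      ext ω; rcases hvals ω with h | h <;> simp [h, h0s, h1s]
    rw [hset, hrhs]
    simp [h0s, h1s, tsub_add_cancel_of_le hq]
  · have hset : g ⁻¹' s = g ⁻¹' {1} := by
      ext ω; rcases hvals ω with h | h <;> simp [h, h0s, h1s]
    rw [hset, hrhs, hlaw]
    simp [h0s, h1s]
  · have hset : g ⁻¹' s = g ⁻¹' {0} := by
      ext ω; rcases hvals ω with h | h <;> simp [h, h0s, h1s]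
    rw [hset, hrhs, h0law]
    simp [h0s, h1s]
  · have hset : g ⁻¹' s = ∅ := by
      ext ω; rcases hvals ω with h | h <;> simp [h, h0s, h1s]
    rw [hset, hrhs]
    simp [h0s, h1s]


/-- In the two-group model, `0 < p* < p` and the method-of-moments estimator
`p̂_M` converges in probability to `p*`. -/
theorem phat_tendstoInMeasure_pstar
    {Ω : Type*} [MeasurableSpace Ω] (P : Measure Ω) [IsProbabilityMeasure P]
    (p θ l ε : ℝ) (hp : p ∈ Ioc (0:ℝ) 1) (hθ : θ ≠ 0) (hl : l ∈ Ioc (0:ℝ) 1)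
    (hε : 0 < ε)
    (J ξ : ℕ → Ω → ℝ)
    (hJm : ∀ m, Measurable (J m)) (hξm : ∀ m, Measurable (ξ m))
    (hJvals : ∀ m ω, J m ω = 0 ∨ J m ω = 1)
    (hJlaw : ∀ m, P {ω | J m ω = 1} = ENNReal.ofReal p)
    (hξlaw : ∀ m, P.map (ξ m) = gaussianReal 0 1)
    (hindep : ProbabilityTheory.iIndepFun
      (Sum.elim J ξ) P)
    (Y : ℕ → Ω → ℝ) (hY : ∀ m ω, Y m ω = l ^ 2 * θ * J m ω + l * ξ m ω)
    (A B pstar : ℝ)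
    (hA : A = Phi (ε / l) - Phi (-ε / l))
    (hB : B = Phi ((ε - l ^ 2 * θ) / l) - Phi ((-ε - l ^ 2 * θ) / l))
    (hpstar : pstar = p * (1 - B / A))
    (phat : ℕ → Ω → ℝ)
    (hphat : ∀ (M : ℕ) (ω : Ω), phat M ω =
      1 - (1 / ((M : ℝ) * A)) *
        ∑ m ∈ Finset.range M, (Icc (-ε) ε).indicator (fun _ => (1:ℝ)) (Y m ω)) :
    (0 < pstar ∧ pstar < p) ∧
      TendstoInMeasure P phat Filter.atTop (fun _ => pstar) := by
  obtain ⟨hp0, hp1⟩ := hp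
  obtain ⟨hl0, hl1⟩ := hl
  have ha : 0 < ε / l := div_pos hε hl0
  have hc : l * θ ≠ 0 := mul_ne_zero hl0.ne' hθ
  have e1 : (ε - l ^ 2 * θ) / l = ε / l - l * θ := by field_simp
  have e2 : (-ε - l ^ 2 * θ) / l = -(ε / l) - l * θ := by field_simp
  have hA' : A = Phi (ε / l) - Phi (-(ε / l)) := by rw [hA, neg_div]
  have hB' : B = Phi (ε / l - l * θ) - Phi (-(ε / l) - l * θ) := by rw [hB, e1, e2]
  have hApos : 0 < A := by
    rw [hA']; linarith [Phi_lt_Phi (show -(ε/l) < ε/l by linarith)]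
  have hBpos : 0 < B := by
    rw [hB']; linarith [Phi_lt_Phi (show -(ε/l) - l*θ < ε/l - l*θ by linarith)]
  have hBA : B < A := by rw [hA', hB']; exact key_ne (ε/l) (l*θ) ha hc
  have hfrac0 : 0 < B / A := div_pos hBpos hApos
  have hfrac1 : B / A < 1 := (div_lt_one hApos).2 hBA
  have hps0 : 0 < pstar := by rw [hpstar]; exact mul_pos hp0 (by linarith)
  have hpsp : pstar < p := by rw [hpstar]; nlinarith
  refine ⟨⟨hps0, hpsp⟩, ?_⟩
  -- the random variables
  set X : ℕ → Ω → ℝ := fun m ω => (Icc (-ε) ε).indicator (fun _ => (1:ℝ)) (Y m ω)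
    with hXdef
  have hYm : ∀ m, Measurable (Y m) := by
    intro m
    have : Y m = fun ω => l ^ 2 * θ * J m ω + l * ξ m ω := funext fun ω => hY m ω
    rw [this]
    exact (measurable_const.mul (hJm m)).add (measurable_const.mul (hξm m))
  have hXm : ∀ m, Measurable (X m) := fun m =>
    (measurable_const.indicator measurableSet_Icc).comp (hYm m)
  set f : ℝ × ℝ → ℝ :=
    fun q => (Icc (-ε) ε).indicator (fun _ => (1:ℝ)) (l ^ 2 * θ * q.1 + l * q.2) with hfdef
  have hf : Measurable f :=
    (measurable_const.indicator measurableSet_Icc).comp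
      ((measurable_const.mul measurable_fst).add (measurable_const.mul measurable_snd))
  have hXeq : ∀ m, X m = f ∘ (fun ω => (J m ω, ξ m ω)) := by
    intro m; funext ω; simp only [hXdef, hfdef, Function.comp_apply, hY m ω]
  have hSm : ∀ k : ℕ ⊕ ℕ, Measurable (Sum.elim J ξ k) := by
    rintro (i | i)
    · exact hJm i
    · exact hξm i
  -- pairwise independence
  have hpair : Pairwise (Function.onFun (IndepFun · · P) X) := by
    intro i j hij
    have h := hindep.indepFun_prodMk_prodMk hSm (Sum.inl i) (Sum.inr i)
      (Sum.inl j) (Sum.inr j) (by simp [hij]) (by simp) (by simp) (by simp [hij])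
    have h2 := h.comp hf hf
    simpa only [Function.onFun, hXeq, Sum.elim_inl, Sum.elim_inr] using h2
  -- identical distribution
  have hJpre : ∀ m, (J m) ⁻¹' {1} = {ω | J m ω = 1} := fun m => rfl
  have hJmap : ∀ m, P.map (J m)
      = (1 - ENNReal.ofReal p) • Measure.dirac (0:ℝ)
        + ENNReal.ofReal p • Measure.dirac (1:ℝ) := by
    intro m
    exact bernoulli_map P (J m) (hJm m) (hJvals m) (ENNReal.ofReal_le_one.2 hp1)
      (by rw [hJpre m]; exact hJlaw m)
  have hJξindep : ∀ m, IndepFun (J m) (ξ m) P := by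
    intro m
    have := hindep.indepFun (show (Sum.inl m : ℕ ⊕ ℕ) ≠ Sum.inr m by simp)
    simpa using this
  have hpairlaw : ∀ m, P.map (fun ω => (J m ω, ξ m ω))
      = ((1 - ENNReal.ofReal p) • Measure.dirac (0:ℝ)
          + ENNReal.ofReal p • Measure.dirac (1:ℝ)).prod (gaussianReal 0 1) := by
    intro m
    rw [(indepFun_iff_map_prod_eq_prod_map_map (hJm m).aemeasurable
      (hξm m).aemeasurable).1 (hJξindep m), hJmap m, hξlaw m]
  have hident : ∀ i, IdentDistrib (X i) (X 0) P P := by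
    intro i
    have hpid : IdentDistrib (fun ω => (J i ω, ξ i ω)) (fun ω => (J 0 ω, ξ 0 ω)) P P :=
      ⟨((hJm i).prodMk (hξm i)).aemeasurable, ((hJm 0).prodMk (hξm 0)).aemeasurable,
        by rw [hpairlaw i, hpairlaw 0]⟩
    have h2 := hpid.comp hf
    rw [hXeq i, hXeq 0]
    exact h2
  -- integrability and expectation
  have hXind : ∀ m, X m = (Y m ⁻¹' Icc (-ε) ε).indicator (fun _ => (1:ℝ)) := by
    intro m; funext ω
    classical
    simp only [hXdef]
    rw [Set.indicator_apply, Set.indicator_apply, mem_preimage]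
    simp
  have hint : Integrable (X 0) P := by
    rw [hXind 0]
    exact (integrable_const (1:ℝ)).indicator (hYm 0 measurableSet_Icc)
  -- compute the measure of the event
  have hkey0 : ∀ x : ℝ, l * x ∈ Icc (-ε) ε ↔ x ∈ Icc ((-ε)/l) (ε/l) := by
    intro x
    rw [mem_Icc, mem_Icc, div_le_iff₀ hl0, le_div_iff₀ hl0]
    constructor <;> (rintro ⟨u, v⟩; constructor <;> linarith [mul_comm x l])
  have hkey1 : ∀ x : ℝ, l ^ 2 * θ + l * x ∈ Icc (-ε) ε
      ↔ x ∈ Icc ((-ε - l ^ 2 * θ)/l) ((ε - l ^ 2 * θ)/l) := by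
    intro x
    rw [mem_Icc, mem_Icc, div_le_iff₀ hl0, le_div_iff₀ hl0]
    constructor <;> (rintro ⟨u, v⟩; constructor <;> linarith [mul_comm x l])
  have hsplit : Y 0 ⁻¹' Icc (-ε) ε
      = (J 0 ⁻¹' {0} ∩ ξ 0 ⁻¹' Icc ((-ε)/l) (ε/l))
        ∪ (J 0 ⁻¹' {1} ∩ ξ 0 ⁻¹' Icc ((-ε - l ^ 2 * θ)/l) ((ε - l ^ 2 * θ)/l)) := by
    ext ω
    rcases hJvals 0 ω with h | h
    · have hy : Y 0 ω = l * ξ 0 ω := by rw [hY 0 ω, h]; ring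
      simp [hy, h, hkey0 (ξ 0 ω)]
    · have hy : Y 0 ω = l ^ 2 * θ + l * ξ 0 ω := by rw [hY 0 ω, h]; ring
      simp [hy, h, hkey1 (ξ 0 ω)]
  have hm1 : MeasurableSet (J 0 ⁻¹' {(1:ℝ)}
      ∩ ξ 0 ⁻¹' Icc ((-ε - l ^ 2 * θ)/l) ((ε - l ^ 2 * θ)/l)) :=
    (hJm 0 (measurableSet_singleton 1)).inter (hξm 0 measurableSet_Icc)
  have hdisj : Disjoint (J 0 ⁻¹' {(0:ℝ)} ∩ ξ 0 ⁻¹' Icc ((-ε)/l) (ε/l))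
      (J 0 ⁻¹' {(1:ℝ)} ∩ ξ 0 ⁻¹' Icc ((-ε - l ^ 2 * θ)/l) ((ε - l ^ 2 * θ)/l)) := by
    rw [Set.disjoint_left]
    rintro ω ⟨h0, -⟩ ⟨h1, -⟩
    simp only [mem_preimage, mem_singleton_iff] at h0 h1
    rw [h0] at h1; norm_num at h1
  have hximap : ∀ s : Set ℝ, MeasurableSet s → P (ξ 0 ⁻¹' s) = gaussianReal 0 1 s := by
    intro s hs
    rw [← hξlaw 0, Measure.map_apply (hξm 0) hs]
  have hJ1 : P (J 0 ⁻¹' {1}) = ENNReal.ofReal p := by rw [hJpre 0]; exact hJlaw 0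
  have hJ0 : P (J 0 ⁻¹' {0}) = ENNReal.ofReal (1 - p) := by
    have hset : J 0 ⁻¹' {(0:ℝ)} = (J 0 ⁻¹' {1})ᶜ := by
      ext ω; rcases hJvals 0 ω with h | h <;> simp [h]
    rw [hset, measure_compl (hJm 0 (measurableSet_singleton 1)) (measure_ne_top _ _),
      measure_univ, hJ1, ← ENNReal.ofReal_one, ← ENNReal.ofReal_sub _ hp0.le]
  have hPS : P (Y 0 ⁻¹' Icc (-ε) ε) = ENNReal.ofReal ((1 - p) * A + p * B) := by
    rw [hsplit, measure_union hdisj hm1,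
      (hJξindep 0).measure_inter_preimage_eq_mul _ _ (measurableSet_singleton 0)
        measurableSet_Icc,
      (hJξindep 0).measure_inter_preimage_eq_mul _ _ (measurableSet_singleton 1)
        measurableSet_Icc,
      hximap _ measurableSet_Icc, hximap _ measurableSet_Icc, hJ0, hJ1,
      nu_Icc _ _ (by rw [neg_div]; linarith : (-ε)/l ≤ ε/l),
      nu_Icc _ _ ((div_le_div_iff_of_pos_right hl0).2 (by linarith) :
        (-ε - l ^ 2 * θ)/l ≤ (ε - l ^ 2 * θ)/l),
      ← hA, ← hB, ← ENNReal.ofReal_mul (by linarith : (0:ℝ) ≤ 1 - p),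
      ← ENNReal.ofReal_mul hp0.le,
      ← ENNReal.ofReal_add (mul_nonneg (by linarith) hApos.le)
        (mul_nonneg hp0.le hBpos.le)]
  have hq_nonneg : (0:ℝ) ≤ (1 - p) * A + p * B :=
    add_nonneg (mul_nonneg (by linarith) hApos.le) (mul_nonneg hp0.le hBpos.le)
  have hEX : ∫ ω, X 0 ω ∂P = (1 - p) * A + p * B := by
    rw [hXind 0, integral_indicator_const (1:ℝ) (hYm 0 measurableSet_Icc), measureReal_def, hPS,
      ENNReal.toReal_ofReal hq_nonneg, smul_eq_mul, mul_one]
  -- strong law of large numbers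
  have hslln := strong_law_ae_real X hint hpair hident
  rw [show (P[X 0]) = (1 - p) * A + p * B from hEX] at hslln
  have hae : ∀ᵐ ω ∂P, Filter.Tendsto (fun n => phat n ω) Filter.atTop (nhds pstar) := by
    filter_upwards [hslln] with ω hω
    have h2 : Filter.Tendsto
        (fun n : ℕ => 1 - ((∑ i ∈ Finset.range n, X i ω) / n) / A)
        Filter.atTop (nhds (1 - ((1 - p) * A + p * B) / A)) :=
      Filter.Tendsto.const_sub _ (hω.div_const A)
    have hps_eq : pstar = 1 - ((1 - p) * A + p * B) / A := by
      rw [hpstar]; field_simp; ring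
    rw [hps_eq]
    apply h2.congr'
    filter_upwards [Filter.eventually_ge_atTop 1] with n hn
    have hn0 : (n:ℝ) ≠ 0 := Nat.cast_ne_zero.2 (by omega)
    have heq : (1 / ((n : ℝ) * A)) * ∑ m ∈ Finset.range n, X m ω
        = ((∑ i ∈ Finset.range n, X i ω) / n) / A := by
      field_simp
    rw [hphat n ω]
    rw [show (∑ m ∈ Finset.range n, (Icc (-ε) ε).indicator (fun _ => (1:ℝ)) (Y m ω))
      = ∑ m ∈ Finset.range n, X m ω from rfl, heq]
  -- convergence in measure
  have hphatm : ∀ n, AEStronglyMeasurable (phat n) P := by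
    intro n
    have : phat n = fun ω => 1 - (1 / ((n : ℝ) * A)) * ∑ m ∈ Finset.range n, X m ω :=
      funext fun ω => hphat n ω
    rw [this]
    exact (measurable_const.sub (measurable_const.mul
      (Finset.measurable_sum _ (fun m _ => hXm m)))).aestronglyMeasurable
  exact tendstoInMeasure_of_tendsto_ae hphatm hae
end

section
/- Two-group model: fix p ∈ (0,1], θ ≠ 0, λ ∈ (0,1], and ε > 0, and let (J_m)_{m≥1} be i.i.d. Bernoulli(p) random variables and (ξ_m)_{m≥1} i.i.d. standard normal random variables independent of the J's; set Y_m = λ²θJ_m + λξ_m. Define A = Φ(ε/λ) − Φ(−ε/λ), p̂_M = 1 − (1/(M·A))·Σ_{m=1}^M 1{−ε ≤ Y_m ≤ ε}, Ȳ_M = (1/M)·Σ_{m=1}^M Y_m, S²_M = (1/(M−1))·Σ_{m=1}^M (Y_m − Ȳ_M)², and τ̂²_M = max{(S²_M − λ² − Ȳ_M²·(1 − p̂_M)/p̂_M)/(p̂_M·λ⁴), 0}. Then τ̂²_M converges in probability to 0 as M → ∞. -/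
open Set MeasureTheory ProbabilityTheory

namespace TauAux

open Real Filter
open scoped ENNReal NNReal

noncomputable def phi : ℝ → ℝ := gaussianPDFReal 0 1

lemma phi_def (x : ℝ) : phi x = (Real.sqrt (2 * π))⁻¹ * Real.exp (-(1/2) * x ^ 2) := by
  simp only [phi, gaussianPDFReal, NNReal.coe_one, mul_one]
  congr 1
  ring

lemma phi_nonneg (x : ℝ) : 0 ≤ phi x := gaussianPDFReal_nonneg 0 1 x

lemma phi_pos (x : ℝ) : 0 < phi x := gaussianPDFReal_pos 0 1 x one_ne_zero

lemma phi_meas : Measurable phi := measurable_gaussianPDFReal 0 1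

lemma phi_integrable : Integrable phi := integrable_gaussianPDFReal 0 1

lemma G_eq : gaussianReal 0 1
    = volume.withDensity (fun x => ((Real.toNNReal (phi x) : ℝ≥0) : ℝ≥0∞)) := by
  rw [gaussianReal_of_var_ne_zero 0 one_ne_zero]
  rfl

lemma integral_gaussian_fun (f : ℝ → ℝ) :
    ∫ x, f x ∂(gaussianReal 0 1) = ∫ x, phi x * f x := by
  rw [G_eq, integral_withDensity_eq_integral_smul phi_meas.real_toNNReal]
  congr 1
  ext x
  rw [NNReal.smul_def, smul_eq_mul, Real.coe_toNNReal _ (phi_nonneg x)]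

lemma integrable_gaussian_iff (f : ℝ → ℝ) :
    Integrable f (gaussianReal 0 1) ↔ Integrable (fun x => phi x * f x) volume := by
  rw [G_eq, integrable_withDensity_iff_integrable_coe_smul phi_meas.real_toNNReal]
  constructor <;> intro h <;> refine h.congr (Filter.Eventually.of_forall fun x => ?_) <;>
    simp [NNReal.smul_def, Real.coe_toNNReal _ (phi_nonneg x)]


lemma integrable_phi_mul_id : Integrable (fun x => phi x * x) volume := by
  have h := (integrable_mul_exp_neg_mul_sq (show (0:ℝ) < 1/2 by norm_num)).const_mul
    ((Real.sqrt (2 * π))⁻¹)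
  refine h.congr (Filter.Eventually.of_forall fun x => ?_)
  simp only [phi_def]; ring

lemma integrable_phi_mul_sq : Integrable (fun x => phi x * x ^ 2) volume := by
  have h := (integrable_rpow_mul_exp_neg_mul_sq (show (0:ℝ) < 1/2 by norm_num)
    (show (-1:ℝ) < 2 by norm_num)).const_mul ((Real.sqrt (2 * π))⁻¹)
  refine h.congr (Filter.Eventually.of_forall fun x => ?_)
  simp only [phi_def, show ∀ y:ℝ, y ^ (2:ℝ) = y ^ 2 from fun y => by
    rw [show (2:ℝ) = ((2:ℕ):ℝ) by norm_num, Real.rpow_natCast]]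
  ring

lemma integral_phi_mul_id : ∫ x, phi x * x = 0 := by
  set f : ℝ → ℝ := fun x => phi x * x with hf
  have hint : Integrable f volume := integrable_phi_mul_id
  have hodd : ∀ x, f (-x) = - f x := by
    intro x
    simp only [hf, phi_def]
    ring_nf
  have hsplit : (∫ x, f x) = (∫ x in Iic 0, f x) + ∫ x in Ioi 0, f x := by
    rw [← setIntegral_union (Iic_disjoint_Ioi le_rfl) measurableSet_Ioi
      hint.integrableOn hint.integrableOn, Iic_union_Ioi, Measure.restrict_univ]
  have hneg : (∫ x in Iic 0, f x) = - ∫ x in Ioi 0, f x := by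
    have h1 : (∫ x in Ioi (0:ℝ), f (-x)) = ∫ x in Iic (-(0:ℝ)), f x :=
      integral_comp_neg_Ioi 0 f
    rw [neg_zero] at h1
    rw [← h1]
    rw [show (fun x => f (-x)) = fun x => - f x from funext hodd]  -- may not typecheck as is
    rw [integral_neg]
  rw [hsplit, hneg, neg_add_cancel]

lemma integral_sq_exp_Ioi :
    (∫ x in Ioi (0:ℝ), x ^ 2 * Real.exp (-(1/2) * x ^ 2)) = Real.sqrt (2*π) / 2 := by
  have h := integral_rpow_mul_exp_neg_mul_rpow (p := 2) (q := 2) (b := 1/2)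
    (by norm_num) (by norm_num) (by norm_num)
  have hconv : ∀ x : ℝ, x ^ (2:ℝ) = x ^ 2 := fun x => by
    rw [show (2:ℝ) = ((2:ℕ):ℝ) by norm_num, Real.rpow_natCast]
  simp only [hconv] at h
  rw [h]
  have hG : Real.Gamma ((2 + 1) / 2) = Real.sqrt π / 2 := by
    rw [show ((2:ℝ) + 1)/2 = 1/2 + 1 by norm_num, Real.Gamma_add_one (by norm_num),
      Real.Gamma_one_half_eq]
    ring
  rw [hG]
  have hb : ((1:ℝ)/2) ^ (-((2:ℝ) + 1) / 2) = 2 ^ ((3:ℝ)/2) := by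
    rw [show ((1:ℝ)/2) = 2⁻¹ by norm_num, ← Real.rpow_neg_one (2:ℝ),
      ← Real.rpow_mul (by norm_num : (0:ℝ) ≤ 2)]
    norm_num
  rw [hb, Real.sqrt_mul (by norm_num : (0:ℝ) ≤ 2), Real.sqrt_eq_rpow, Real.sqrt_eq_rpow]
  have h32 : (2:ℝ) ^ ((3:ℝ)/2) = 2 * 2 ^ ((1:ℝ)/2) := by
    rw [show (3:ℝ)/2 = 1 + 1/2 by norm_num, Real.rpow_add (by norm_num), Real.rpow_one]
  rw [h32]
  ring


lemma integral_phi_mul_sq_val : ∫ x, phi x * x ^ 2 = 1 := by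
  have h1 : (fun x : ℝ => phi x * x ^ 2)
      = fun x => (Real.sqrt (2*π))⁻¹ * (x ^ 2 * Real.exp (-(1/2) * x ^ 2)) := by
    funext x; simp only [phi_def]; ring
  have h2 : (fun x : ℝ => x ^ 2 * Real.exp (-(1/2) * x ^ 2))
      = fun x : ℝ => |x| ^ 2 * Real.exp (-(1/2) * |x| ^ 2) := by
    funext x; rw [sq_abs]
  rw [h1, integral_const_mul, h2,
    integral_comp_abs (f := fun x : ℝ => x ^ 2 * Real.exp (-(1/2) * x ^ 2)),
    integral_sq_exp_Ioi]
  rw [mul_div_assoc']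
  rw [inv_mul_eq_div, div_eq_one_iff_eq (by positivity)]
  ring

lemma integral_id_G : ∫ x, x ∂(gaussianReal 0 1) = 0 := by
  rw [integral_gaussian_fun (fun x => x), integral_phi_mul_id]

lemma integral_sq_G : ∫ x, x ^ 2 ∂(gaussianReal 0 1) = 1 := by
  rw [integral_gaussian_fun (fun x => x ^ 2), integral_phi_mul_sq_val]

lemma integrable_id_G : Integrable (fun x : ℝ => x) (gaussianReal 0 1) :=
  (integrable_gaussian_iff _).2 integrable_phi_mul_id

lemma integrable_sq_G : Integrable (fun x : ℝ => x ^ 2) (gaussianReal 0 1) :=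
  (integrable_gaussian_iff _).2 integrable_phi_mul_sq

lemma Phi_eq (t : ℝ) : Phi t = ∫ x in Iic t, phi x := by
  rw [Phi, gaussianReal_apply_eq_integral 0 one_ne_zero,
    ENNReal.toReal_ofReal (setIntegral_nonneg measurableSet_Iic fun x _ => gaussianPDFReal_nonneg 0 1 x)]
  rfl

lemma Phi_sub (a b : ℝ) : Phi b - Phi a = ∫ x in a..b, phi x := by
  rw [Phi_eq, Phi_eq]
  exact intervalIntegral.integral_Iic_sub_Iic phi_integrable.integrableOn
    phi_integrable.integrableOn

lemma G_Icc {a b : ℝ} (hab : a ≤ b) :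
    ((gaussianReal 0 1) (Icc a b)).toReal = Phi b - Phi a := by
  rw [gaussianReal_apply_eq_integral 0 one_ne_zero,
    ENNReal.toReal_ofReal (setIntegral_nonneg measurableSet_Icc
      fun x _ => gaussianPDFReal_nonneg 0 1 x), Phi_sub, intervalIntegral.integral_of_le hab]
  show (∫ x in Icc a b, phi x) = _
  rw [integral_Icc_eq_integral_Ioc]

lemma Phi_shift_lt {a c : ℝ} (ha : 0 < a) (hc : c ≠ 0) :
    Phi (a - c) - Phi (-a - c) < Phi a - Phi (-a) := by
  have hii : ∀ u v d : ℝ, IntervalIntegrable (fun x => phi (x - d)) volume u v :=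
    fun u v d => (phi_integrable.comp_sub_right d).intervalIntegrable
  have hii0 : ∀ u v : ℝ, IntervalIntegrable phi volume u v :=
    fun u v => phi_integrable.intervalIntegrable
  have e3 : (∫ x in (-a-c)..(-a), phi x) = ∫ x in (a-c)..a, phi (x - 2*a) := by
    rw [intervalIntegral.integral_comp_sub_right (fun x => phi x) (2*a)]
    norm_num
    ring_nf
  have e4 : (∫ x in (a-c)..a, (phi x - phi (x - 2*a)))
      = (∫ x in (a-c)..a, phi x) - ∫ x in (a-c)..a, phi (x - 2*a) :=
    intervalIntegral.integral_sub (hii0 _ _) (hii _ _ _)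
  have key : (Phi a - Phi (-a)) - (Phi (a-c) - Phi (-a-c))
      = ∫ x in (a-c)..a, (phi x - phi (x - 2*a)) := by
    have e1 : Phi a - Phi (a-c) = ∫ x in (a-c)..a, phi x := Phi_sub _ _
    have e2 : Phi (-a) - Phi (-a-c) = ∫ x in (-a-c)..(-a), phi x := Phi_sub _ _
    rw [e4, ← e1, ← e3, ← e2]
    ring
  have hpos : 0 < ∫ x in (a-c)..a, (phi x - phi (x - 2*a)) := by
    rcases lt_or_gt_of_ne hc with hneg | hposc
    · -- c < 0 : a < a - c
      have hswap : (∫ x in (a-c)..a, (phi x - phi (x - 2*a)))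
          = ∫ x in a..(a-c), (phi (x - 2*a) - phi x) := by
        rw [intervalIntegral.integral_symm, ← intervalIntegral.integral_neg]
        congr 1
        funext x
        ring
      rw [hswap]
      apply intervalIntegral.intervalIntegral_pos_of_pos_on
        ((hii _ _ _).sub (hii0 _ _))
      · intro x hx
        have hx1 : a < x := hx.1
        have hsq : (x - 2*a)^2 < x^2 := by nlinarith
        simp only [phi_def, ← mul_sub]
        have hexp : Real.exp (-(1/2) * x^2) < Real.exp (-(1/2) * (x - 2*a)^2) :=
          Real.exp_lt_exp.2 (by nlinarith)
        have hs : (0:ℝ) < (Real.sqrt (2*π))⁻¹ := by positivity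
        nlinarith
      · linarith
    · -- c > 0 : a - c < a
      apply intervalIntegral.intervalIntegral_pos_of_pos_on
        ((hii0 _ _).sub (hii _ _ _))
      · intro x hx
        have hx1 : x < a := hx.2
        have hsq : x^2 < (x - 2*a)^2 := by nlinarith
        simp only [phi_def, ← mul_sub]
        have hexp : Real.exp (-(1/2) * (x - 2*a)^2) < Real.exp (-(1/2) * x^2) :=
          Real.exp_lt_exp.2 (by nlinarith)
        have hs : (0:ℝ) < (Real.sqrt (2*π))⁻¹ := by positivity
        nlinarith
      · linarith
  linarith [key ▸ hpos]

lemma Phi_pos_interval {a : ℝ} (ha : 0 < a) : 0 < Phi a - Phi (-a) := by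
  rw [Phi_sub]
  exact intervalIntegral.intervalIntegral_pos_of_pos_on
    phi_integrable.intervalIntegrable (fun x _ => phi_pos x) (by linarith)

end TauAux

set_option maxHeartbeats 1000000 in
/-- In the two-group model, the method-of-moments estimator `τ̂²_M`
converges in probability to `0`. -/
theorem tauhatSq_tendstoInMeasure_zero
    {Ω : Type*} [MeasurableSpace Ω] (P : Measure Ω) [IsProbabilityMeasure P]
    (p θ l ε : ℝ) (hp : p ∈ Ioc (0:ℝ) 1) (hθ : θ ≠ 0) (hl : l ∈ Ioc (0:ℝ) 1)
    (hε : 0 < ε)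
    (J ξ : ℕ → Ω → ℝ)
    (hJm : ∀ m, Measurable (J m)) (hξm : ∀ m, Measurable (ξ m))
    (hJvals : ∀ m ω, J m ω = 0 ∨ J m ω = 1)
    (hJlaw : ∀ m, P {ω | J m ω = 1} = ENNReal.ofReal p)
    (hξlaw : ∀ m, P.map (ξ m) = gaussianReal 0 1)
    (hindep : ProbabilityTheory.iIndepFun
      (Sum.elim J ξ) P)
    (Y : ℕ → Ω → ℝ) (hY : ∀ m ω, Y m ω = l ^ 2 * θ * J m ω + l * ξ m ω)
    (A : ℝ) (hA : A = Phi (ε / l) - Phi (-ε / l))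
    (phat : ℕ → Ω → ℝ)
    (hphat : ∀ (M : ℕ) (ω : Ω), phat M ω =
      1 - (1 / ((M : ℝ) * A)) *
        ∑ m ∈ Finset.range M, (Icc (-ε) ε).indicator (fun _ => (1:ℝ)) (Y m ω))
    (Ybar : ℕ → Ω → ℝ)
    (hYbar : ∀ (M : ℕ) (ω : Ω), Ybar M ω =
      (1 / (M : ℝ)) * ∑ m ∈ Finset.range M, Y m ω)
    (S2 : ℕ → Ω → ℝ)
    (hS2 : ∀ (M : ℕ) (ω : Ω), S2 M ω =
      (1 / ((M : ℝ) - 1)) * ∑ m ∈ Finset.range M, (Y m ω - Ybar M ω) ^ 2)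
    (tauhat2 : ℕ → Ω → ℝ)
    (htauhat2 : ∀ (M : ℕ) (ω : Ω), tauhat2 M ω =
      max ((S2 M ω - l ^ 2 - Ybar M ω ^ 2 * (1 - phat M ω) / phat M ω) /
        (phat M ω * l ^ 4)) 0) :
    TendstoInMeasure P tauhat2 Filter.atTop (fun _ => 0) := by
    classical
  obtain ⟨hp0, hp1⟩ := hp
  obtain ⟨hl0, hl1⟩ := hl
  -- basic measurability
  have hYmeas : ∀ m, Measurable (Y m) := by
    intro m
    have hYm : Y m = fun ω => l ^ 2 * θ * J m ω + l * ξ m ω := funext (hY m)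
    rw [hYm]
    exact ((hJm m).const_mul _).add ((hξm m).const_mul _)
  have hindicator : Measurable ((Icc (-ε) ε).indicator (fun _ => (1:ℝ))) :=
    measurable_const.indicator measurableSet_Icc
  -- the law of J m
  have hJA : ∀ m, MeasurableSet {ω | J m ω = 1} := fun m =>
    (hJm m) (measurableSet_singleton 1)
  have hJcompl : ∀ m, P ({ω | J m ω = 1}ᶜ) = ENNReal.ofReal (1 - p) := by
    intro m
    rw [measure_compl (hJA m) (measure_ne_top _ _), hJlaw m, measure_univ,
      ← ENNReal.ofReal_one, ← ENNReal.ofReal_sub _ hp0.le]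
  have hJlawmap : ∀ m, P.map (J m)
      = ENNReal.ofReal p • Measure.dirac (1:ℝ) + ENNReal.ofReal (1-p) • Measure.dirac (0:ℝ) := by
    intro m
    ext s hs
    rw [Measure.map_apply (hJm m) hs]
    simp only [Measure.add_apply, Measure.smul_apply, smul_eq_mul,
      Measure.dirac_apply' _ hs]
    by_cases h1 : (1:ℝ) ∈ s <;> by_cases h0 : (0:ℝ) ∈ s
    · have hset : J m ⁻¹' s = univ := by
        ext ω
        simp only [mem_preimage, mem_univ, iff_true]
        rcases hJvals m ω with h | h <;> rw [h] <;> assumption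
      rw [hset]
      simp only [measure_univ, Set.indicator_of_mem h1, Set.indicator_of_mem h0,
        Pi.one_apply, mul_one]
      rw [← ENNReal.ofReal_add hp0.le (by linarith)]
      norm_num
    · have hset : J m ⁻¹' s = {ω | J m ω = 1} := by
        ext ω
        simp only [mem_preimage, mem_setOf_eq]
        rcases hJvals m ω with h | h <;> rw [h] <;> simp [h0, h1]
      rw [hset, hJlaw m]
      simp [Set.indicator_of_mem h1, Set.indicator_of_notMem h0]
    · have hset : J m ⁻¹' s = {ω | J m ω = 1}ᶜ := by
        ext ω
        simp only [mem_preimage, mem_compl_iff, mem_setOf_eq]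
        rcases hJvals m ω with h | h <;> rw [h] <;> simp [h0, h1]
      rw [hset, hJcompl m]
      simp [Set.indicator_of_notMem h1, Set.indicator_of_mem h0]
    · have hset : J m ⁻¹' s = ∅ := by
        ext ω
        simp only [mem_preimage, mem_empty_iff_false, iff_false]
        rcases hJvals m ω with h | h <;> rw [h] <;> assumption
      rw [hset]
      simp [Set.indicator_of_notMem h1, Set.indicator_of_notMem h0]
  -- pairs (J m, ξ m) are iid
  have hmeasElim : ∀ i : ℕ ⊕ ℕ, Measurable (Sum.elim J ξ i) := by
    rintro (m | m)
    exacts [hJm m, hξm m]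
  have hJξindep : ∀ m, IndepFun (J m) (ξ m) P := fun m =>
    hindep.indepFun (show (Sum.inl m : ℕ ⊕ ℕ) ≠ Sum.inr m by simp)
  have hpairlaw : ∀ m, P.map (fun ω => (J m ω, ξ m ω))
      = (ENNReal.ofReal p • Measure.dirac (1:ℝ)
          + ENNReal.ofReal (1-p) • Measure.dirac (0:ℝ)).prod (gaussianReal 0 1) := by
    intro m
    rw [(indepFun_iff_map_prod_eq_prod_map_map (hJm m).aemeasurable
      (hξm m).aemeasurable).1 (hJξindep m), hξlaw m, hJlawmap m]
  have hpairident : ∀ m, IdentDistrib (fun ω => (J m ω, ξ m ω))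
      (fun ω => (J 0 ω, ξ 0 ω)) P P := fun m =>
    ⟨((hJm m).prodMk (hξm m)).aemeasurable, ((hJm 0).prodMk (hξm 0)).aemeasurable,
      by rw [hpairlaw m, hpairlaw 0]⟩
  have hpairindep : ∀ m n, m ≠ n → IndepFun (fun ω => (J m ω, ξ m ω))
      (fun ω => (J n ω, ξ n ω)) P := by
    intro m n hmn
    exact hindep.indepFun_prodMk_prodMk hmeasElim (Sum.inl m) (Sum.inr m)
      (Sum.inl n) (Sum.inr n) (by simp [hmn]) (by simp) (by simp) (by simp [hmn])
  -- strong law of large numbers for functions of the pairs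
  have slln : ∀ (g : ℝ × ℝ → ℝ), Measurable g →
      Integrable (fun ω => g (J 0 ω, ξ 0 ω)) P →
      ∀ᵐ ω ∂P, Filter.Tendsto
        (fun M : ℕ => (∑ m ∈ Finset.range M, g (J m ω, ξ m ω)) / M)
        Filter.atTop (nhds (∫ ω, g (J 0 ω, ξ 0 ω) ∂P)) := by
    intro g hg hint
    exact strong_law_ae_real _ hint
      (fun m n hmn => (hpairindep m n hmn).comp hg hg)
      (fun m => (hpairident m).comp hg)
  -- integrability and moments of ξ 0
  have hξint : Integrable (ξ 0) P := by
    have h : Integrable (fun x : ℝ => x) (P.map (ξ 0)) := by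
      rw [hξlaw 0]; exact TauAux.integrable_id_G
    exact (integrable_map_measure measurable_id.aestronglyMeasurable
      (hξm 0).aemeasurable).1 h
  have hξsqint : Integrable (fun ω => (ξ 0 ω) ^ 2) P := by
    have h : Integrable (fun x : ℝ => x ^ 2) (P.map (ξ 0)) := by
      rw [hξlaw 0]; exact TauAux.integrable_sq_G
    exact (integrable_map_measure (measurable_id.pow_const 2).aestronglyMeasurable
      (hξm 0).aemeasurable).1 h
  have hξmean : ∫ ω, ξ 0 ω ∂P = 0 := by
    have hfme : AEStronglyMeasurable (fun x : ℝ => x) (P.map (ξ 0)) :=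
      measurable_id.aestronglyMeasurable
    have h := integral_map (hξm 0).aemeasurable hfme
    rw [hξlaw 0] at h
    simpa [TauAux.integral_id_G] using h.symm
  have hξsqmean : ∫ ω, (ξ 0 ω) ^ 2 ∂P = 1 := by
    have hfme : AEStronglyMeasurable (fun x : ℝ => x ^ 2) (P.map (ξ 0)) :=
      (measurable_id.pow_const 2).aestronglyMeasurable
    have h := integral_map (hξm 0).aemeasurable hfme
    rw [hξlaw 0] at h
    simpa [TauAux.integral_sq_G] using h.symm
  -- integrability and moments of J 0
  have hJind : ∀ m, J m = Set.indicator {ω | J m ω = 1} (fun _ => (1:ℝ)) := by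
    intro m
    funext ω
    rcases hJvals m ω with h | h
    · have hnot : ω ∉ {ω | J m ω = 1} := by simp [h]
      rw [Set.indicator_of_notMem hnot]
      exact h
    · have hmem : ω ∈ {ω | J m ω = 1} := h
      rw [Set.indicator_of_mem hmem]
      exact h
  have hJint : Integrable (J 0) P := by
    rw [hJind 0]
    exact (integrable_const (1:ℝ)).indicator (hJA 0)
  have hJmean : ∫ ω, J 0 ω ∂P = p := by
    conv_lhs => rw [hJind 0]
    rw [integral_indicator_const (1:ℝ) (hJA 0), measureReal_def, hJlaw 0, smul_eq_mul, mul_one,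
      ENNReal.toReal_ofReal hp0.le]
  have hJξint : Integrable (fun ω => J 0 ω * ξ 0 ω) P := by
    refine hξint.abs.mono' ((hJm 0).mul (hξm 0)).aestronglyMeasurable
      (Filter.Eventually.of_forall fun ω => ?_)
    rcases hJvals 0 ω with h | h <;> rw [h] <;> simp [abs_nonneg]
  have hJξmean : ∫ ω, J 0 ω * ξ 0 ω ∂P = 0 := by
    have h := (hJξindep 0).integral_mul_eq_mul_integral hJint.aestronglyMeasurable hξint.aestronglyMeasurable
    have h2 : (fun ω => J 0 ω * ξ 0 ω) = J 0 * ξ 0 := rfl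
    rw [h2, h, hξmean, mul_zero]
  -- moments of Y 0
  have hYint : Integrable (Y 0) P := by
    have hY0 : Y 0 = fun ω => l ^ 2 * θ * J 0 ω + l * ξ 0 ω := funext (hY 0)
    rw [hY0]
    exact (hJint.const_mul _).add (hξint.const_mul _)
  have hYmean : ∫ ω, Y 0 ω ∂P = l ^ 2 * θ * p := by
    have hY0 : Y 0 = fun ω => l ^ 2 * θ * J 0 ω + l * ξ 0 ω := funext (hY 0)
    rw [hY0, integral_add (hJint.const_mul _) (hξint.const_mul _),
      integral_const_mul, integral_const_mul, hJmean, hξmean]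
    ring
  have hYsqeq : (fun ω => (Y 0 ω) ^ 2)
      = fun ω => l ^ 4 * θ ^ 2 * J 0 ω + (2 * l ^ 3 * θ) * (J 0 ω * ξ 0 ω)
          + l ^ 2 * (ξ 0 ω) ^ 2 := by
    funext ω
    rw [hY 0 ω]
    rcases hJvals 0 ω with h | h <;> rw [h] <;> ring
  have hYsqint : Integrable (fun ω => (Y 0 ω) ^ 2) P := by
    rw [hYsqeq]
    exact ((hJint.const_mul _).add (hJξint.const_mul _)).add (hξsqint.const_mul _)
  have hYsqmean : ∫ ω, (Y 0 ω) ^ 2 ∂P = l ^ 4 * θ ^ 2 * p + l ^ 2 := by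
    have hi1 : Integrable (fun ω => l ^ 4 * θ ^ 2 * J 0 ω) P := hJint.const_mul _
    have hi2 : Integrable (fun ω => (2 * l ^ 3 * θ) * (J 0 ω * ξ 0 ω)) P :=
      hJξint.const_mul _
    have hi3 : Integrable (fun ω => l ^ 2 * (ξ 0 ω) ^ 2) P := hξsqint.const_mul _
    have hi12 : Integrable (fun ω => l ^ 4 * θ ^ 2 * J 0 ω
        + (2 * l ^ 3 * θ) * (J 0 ω * ξ 0 ω)) P := hi1.add hi2
    rw [hYsqeq, integral_add hi12 hi3, integral_add hi1 hi2,
      integral_const_mul, integral_const_mul, integral_const_mul,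
      hJmean, hJξmean, hξsqmean]
    ring
  -- interval probabilities
  have hdivle : ∀ a b : ℝ, a ≤ b → a / l ≤ b / l := fun a b hab =>
    (div_le_div_iff_of_pos_right hl0).2 hab
  have hA' : A = Phi (ε / l) - Phi (-(ε / l)) := by rw [hA, neg_div]
  have hApos : 0 < A := by
    rw [hA']; exact TauAux.Phi_pos_interval (div_pos hε hl0)
  have hGI0 : ((gaussianReal 0 1) (Icc (-ε / l) (ε / l))).toReal = A := by
    rw [TauAux.G_Icc (hdivle _ _ (by linarith)), hA]
  set B : ℝ := ((gaussianReal 0 1)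
    (Icc ((-ε - l ^ 2 * θ) / l) ((ε - l ^ 2 * θ) / l))).toReal with hBdef
  have hBnonneg : 0 ≤ B := ENNReal.toReal_nonneg
  have hBeq : B = Phi ((ε - l ^ 2 * θ) / l) - Phi ((-ε - l ^ 2 * θ) / l) :=
    TauAux.G_Icc (hdivle _ _ (by linarith))
  have hBA : B < A := by
    have h1 : (ε - l ^ 2 * θ) / l = ε / l - l * θ := by
      field_simp
    have h2 : (-ε - l ^ 2 * θ) / l = -(ε / l) - l * θ := by
      field_simp
    rw [hBeq, h1, h2, hA']
    exact TauAux.Phi_shift_lt (div_pos hε hl0) (mul_ne_zero hl0.ne' hθ)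
  -- the distribution of Y 0 on the interval
  have hpreY : (Y 0) ⁻¹' (Icc (-ε) ε)
      = ({ω | J 0 ω = 1} ∩ (ξ 0) ⁻¹' (Icc ((-ε - l ^ 2 * θ) / l) ((ε - l ^ 2 * θ) / l)))
        ∪ ({ω | J 0 ω = 1}ᶜ ∩ (ξ 0) ⁻¹' (Icc (-ε / l) (ε / l))) := by
    ext ω
    simp only [mem_preimage, mem_union, mem_inter_iff, mem_compl_iff, mem_setOf_eq,
      mem_Icc, hY 0 ω]
    rcases hJvals 0 ω with h | h <;> rw [h]
    · have h01 : ¬ ((0:ℝ) = 1) := by norm_num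
      simp only [h01, false_and, false_or, not_false_eq_true, true_and]
      constructor
      · rintro ⟨u, v⟩
        constructor
        · rw [div_le_iff₀ hl0]; nlinarith
        · rw [le_div_iff₀ hl0]; nlinarith
      · rintro ⟨u, v⟩
        rw [div_le_iff₀ hl0] at u
        rw [le_div_iff₀ hl0] at v
        constructor <;> nlinarith
    · have h11 : ((1:ℝ) = 1) := rfl
      simp only [h11, true_and, not_true_eq_false, false_and, or_false]
      constructor
      · rintro ⟨u, v⟩
        constructor
        · rw [div_le_iff₀ hl0]; nlinarith
        · rw [le_div_iff₀ hl0]; nlinarith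
      · rintro ⟨u, v⟩
        rw [div_le_iff₀ hl0] at u
        rw [le_div_iff₀ hl0] at v
        constructor <;> nlinarith
  have hset1 : J 0 ⁻¹' ({(1:ℝ)}) = {ω | J 0 ω = 1} := by
    ext ω; simp [Set.mem_preimage]
  have hset1c : J 0 ⁻¹' ({(1:ℝ)}ᶜ) = {ω | J 0 ω = 1}ᶜ := by
    ext ω; simp [Set.mem_preimage]
  have hξpre : ∀ a b : ℝ, P ((ξ 0) ⁻¹' (Icc a b)) = (gaussianReal 0 1) (Icc a b) := by
    intro a b
    rw [← Measure.map_apply (hξm 0) measurableSet_Icc, hξlaw 0]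
  have hP1 : P ({ω | J 0 ω = 1} ∩ (ξ 0) ⁻¹' (Icc ((-ε - l ^ 2 * θ) / l) ((ε - l ^ 2 * θ) / l)))
      = ENNReal.ofReal p * (gaussianReal 0 1) (Icc ((-ε - l ^ 2 * θ) / l) ((ε - l ^ 2 * θ) / l)) := by
    rw [← hset1, (hJξindep 0).measure_inter_preimage_eq_mul _ _
      (measurableSet_singleton 1) measurableSet_Icc, hset1, hJlaw 0, hξpre]
  have hP2 : P ({ω | J 0 ω = 1}ᶜ ∩ (ξ 0) ⁻¹' (Icc (-ε / l) (ε / l)))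
      = ENNReal.ofReal (1 - p) * (gaussianReal 0 1) (Icc (-ε / l) (ε / l)) := by
    rw [← hset1c, (hJξindep 0).measure_inter_preimage_eq_mul _ _
      (measurableSet_singleton 1).compl measurableSet_Icc, hset1c, hJcompl 0, hξpre]
  have hqmean : ∫ ω, (Icc (-ε) ε).indicator (fun _ => (1:ℝ)) (Y 0 ω) ∂P
      = p * B + (1 - p) * A := by
    have hind2 : (fun ω => (Icc (-ε) ε).indicator (fun _ => (1:ℝ)) (Y 0 ω))
        = Set.indicator ((Y 0) ⁻¹' (Icc (-ε) ε)) (fun _ => (1:ℝ)) := by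
      funext ω
      by_cases hmem : Y 0 ω ∈ Icc (-ε) ε
      · rw [Set.indicator_of_mem hmem, Set.indicator_of_mem (hmem : ω ∈ _)]
      · rw [Set.indicator_of_notMem hmem, Set.indicator_of_notMem (hmem : ω ∉ _)]
    have hdisj : Disjoint
        ({ω | J 0 ω = 1} ∩ (ξ 0) ⁻¹' (Icc ((-ε - l ^ 2 * θ) / l) ((ε - l ^ 2 * θ) / l)))
        ({ω | J 0 ω = 1}ᶜ ∩ (ξ 0) ⁻¹' (Icc (-ε / l) (ε / l))) :=
      disjoint_compl_right.mono inter_subset_left inter_subset_left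
    have hmeas2 : MeasurableSet ({ω | J 0 ω = 1}ᶜ ∩ (ξ 0) ⁻¹' (Icc (-ε / l) (ε / l))) :=
      (hJA 0).compl.inter ((hξm 0) measurableSet_Icc)
    rw [hind2, integral_indicator_const (1:ℝ) ((hYmeas 0) measurableSet_Icc),
      smul_eq_mul, mul_one, measureReal_def, hpreY, measure_union hdisj hmeas2, hP1, hP2,
      ENNReal.toReal_add (ENNReal.mul_ne_top ENNReal.ofReal_ne_top (measure_ne_top _ _))
        (ENNReal.mul_ne_top ENNReal.ofReal_ne_top (measure_ne_top _ _)),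
      ENNReal.toReal_mul, ENNReal.toReal_mul, ENNReal.toReal_ofReal hp0.le,
      ENNReal.toReal_ofReal (by linarith : (0:ℝ) ≤ 1 - p), ← hBdef, hGI0]
  -- SLLN applications
  set g1 : ℝ × ℝ → ℝ := fun q => l ^ 2 * θ * q.1 + l * q.2 with hg1def
  have hg1 : Measurable g1 := (measurable_fst.const_mul _).add (measurable_snd.const_mul _)
  have hYg1 : ∀ m ω, g1 (J m ω, ξ m ω) = Y m ω := fun m ω => (hY m ω).symm
  have hint1 : Integrable (fun ω => g1 (J 0 ω, ξ 0 ω)) P :=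
    hYint.congr (Filter.Eventually.of_forall fun ω => (hYg1 0 ω).symm)
  have sl1 := slln g1 hg1 hint1
  have hg2 : Measurable (fun q : ℝ × ℝ => (g1 q) ^ 2) := hg1.pow_const 2
  have hint2 : Integrable (fun ω => (g1 (J 0 ω, ξ 0 ω)) ^ 2) P := by
    refine hYsqint.congr (Filter.Eventually.of_forall fun ω => ?_)
    simp only [hYg1]
  have sl2 := slln _ hg2 hint2
  have hg3 : Measurable (fun q : ℝ × ℝ =>
      (Icc (-ε) ε).indicator (fun _ => (1:ℝ)) (g1 q)) := hindicator.comp hg1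
  have hint3 : Integrable (fun ω =>
      (Icc (-ε) ε).indicator (fun _ => (1:ℝ)) (g1 (J 0 ω, ξ 0 ω))) P := by
    refine (integrable_const (1:ℝ)).mono'
      (hg3.comp ((hJm 0).prodMk (hξm 0))).aestronglyMeasurable
      (Filter.Eventually.of_forall fun ω => ?_)
    by_cases hmem : g1 (J 0 ω, ξ 0 ω) ∈ Icc (-ε) ε
    · rw [Set.indicator_of_mem hmem]; norm_num
    · rw [Set.indicator_of_notMem hmem]; norm_num
  have sl3 := slln _ hg3 hint3
  have hL1 : ∫ ω, g1 (J 0 ω, ξ 0 ω) ∂P = l ^ 2 * θ * p := by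
    simp only [hYg1]; exact hYmean
  have hL2 : ∫ ω, (g1 (J 0 ω, ξ 0 ω)) ^ 2 ∂P = l ^ 4 * θ ^ 2 * p + l ^ 2 := by
    simp only [hYg1]; exact hYsqmean
  have hL3 : ∫ ω, (Icc (-ε) ε).indicator (fun _ => (1:ℝ)) (g1 (J 0 ω, ξ 0 ω)) ∂P
      = p * B + (1 - p) * A := by
    simp only [hYg1]; exact hqmean
  rw [hL1] at sl1
  rw [hL2] at sl2
  rw [hL3] at sl3
  -- the limiting constants
  set pstar : ℝ := 1 - (p * B + (1 - p) * A) / A with hpstardef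
  have hpstar_eq : pstar = p * (A - B) / A := by
    rw [hpstardef]
    field_simp [hApos.ne']
    ring
  have hpstar_pos : 0 < pstar := by
    rw [hpstar_eq]; exact div_pos (mul_pos hp0 (by linarith)) hApos
  have hpstar_le : pstar ≤ p := by
    rw [hpstar_eq, div_le_iff₀ hApos]
    nlinarith
  have hNL : ((l ^ 4 * θ ^ 2 * p + l ^ 2) - (l ^ 2 * θ * p) ^ 2) - l ^ 2
      - (l ^ 2 * θ * p) ^ 2 * (1 - pstar) / pstar ≤ 0 := by
    have hkey : ((l ^ 4 * θ ^ 2 * p + l ^ 2) - (l ^ 2 * θ * p) ^ 2) - l ^ 2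
        - (l ^ 2 * θ * p) ^ 2 * (1 - pstar) / pstar
        = l ^ 4 * θ ^ 2 * p * (pstar - p) / pstar := by
      field_simp
      ring
    rw [hkey]
    apply div_nonpos_of_nonpos_of_nonneg _ hpstar_pos.le
    have h1 : (0:ℝ) ≤ l ^ 4 * θ ^ 2 * p := by
      apply mul_nonneg (by positivity) hp0.le
    nlinarith
  -- measurability of the estimators
  have hphatmeas : ∀ M, Measurable (phat M) := by
    intro M
    have h : phat M = fun ω => 1 - (1 / ((M : ℝ) * A)) *
        ∑ m ∈ Finset.range M, (Icc (-ε) ε).indicator (fun _ => (1:ℝ)) (Y m ω) :=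
      funext (hphat M)
    rw [h]
    exact measurable_const.sub
      ((Finset.measurable_sum _ fun m _ => hindicator.comp (hYmeas m)).const_mul _)
  have hYbarmeas : ∀ M, Measurable (Ybar M) := by
    intro M
    have h : Ybar M = fun ω => (1 / (M : ℝ)) * ∑ m ∈ Finset.range M, Y m ω :=
      funext (hYbar M)
    rw [h]
    exact (Finset.measurable_sum _ fun m _ => hYmeas m).const_mul _
  have hS2meas : ∀ M, Measurable (S2 M) := by
    intro M
    have h : S2 M = fun ω => (1 / ((M : ℝ) - 1)) *
        ∑ m ∈ Finset.range M, (Y m ω - Ybar M ω) ^ 2 := funext (hS2 M)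
    rw [h]
    exact (Finset.measurable_sum _ fun m _ =>
      ((hYmeas m).sub (hYbarmeas M)).pow_const 2).const_mul _
  have htaumeas : ∀ M, AEStronglyMeasurable (tauhat2 M) P := by
    intro M
    have h : tauhat2 M = fun ω =>
        max ((S2 M ω - l ^ 2 - Ybar M ω ^ 2 * (1 - phat M ω) / phat M ω) /
          (phat M ω * l ^ 4)) 0 := funext (htauhat2 M)
    rw [h]
    exact (((((hS2meas M).sub measurable_const).sub
      ((((hYbarmeas M).pow_const 2).mul (measurable_const.sub (hphatmeas M))).div
        (hphatmeas M))).div ((hphatmeas M).mul measurable_const)).max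
          measurable_const).aestronglyMeasurable
  -- the ratio M/(M-1) tends to 1
  have hratio : Filter.Tendsto (fun M : ℕ => (M:ℝ) / ((M:ℝ) - 1))
      Filter.atTop (nhds 1) := by
    have h8 : Filter.Tendsto (fun M : ℕ => (M:ℝ) - 1) Filter.atTop Filter.atTop := by
      have := Filter.tendsto_atTop_add_const_right Filter.atTop (-1 : ℝ)
        tendsto_natCast_atTop_atTop
      simpa [sub_eq_add_neg] using this
    have hinv := h8.inv_tendsto_atTop
    have hlim : Filter.Tendsto (fun M : ℕ => 1 + ((M:ℝ) - 1)⁻¹)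
        Filter.atTop (nhds 1) := by
      have := (tendsto_const_nhds (x := (1:ℝ)) (f := Filter.atTop (α := ℕ))).add hinv
      simpa using this
    apply hlim.congr'
    filter_upwards [Filter.eventually_ge_atTop 2] with M hM
    have hne : (M:ℝ) - 1 ≠ 0 := by
      have : (2:ℝ) ≤ (M:ℝ) := by exact_mod_cast hM
      linarith
    field_simp
    ring
  -- conclusion via a.e. convergence
  apply tendstoInMeasure_of_tendsto_ae htaumeas
  filter_upwards [sl1, sl2, sl3] with ω h1 h2 h3
  simp only [hYg1] at h1 h2 h3
  have hYbar_t : Filter.Tendsto (fun M : ℕ => Ybar M ω)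
      Filter.atTop (nhds (l ^ 2 * θ * p)) := by
    have heq : (fun M : ℕ => Ybar M ω)
        = fun M : ℕ => (∑ m ∈ Finset.range M, Y m ω) / (M : ℝ) := by
      funext M
      rw [hYbar M ω, one_div, inv_mul_eq_div]
    rw [heq]
    exact h1
  have hphat_t : Filter.Tendsto (fun M : ℕ => phat M ω) Filter.atTop (nhds pstar) := by
    have heq : (fun M : ℕ => phat M ω) = fun M : ℕ => 1 - (1 / A) *
        ((∑ m ∈ Finset.range M, (Icc (-ε) ε).indicator (fun _ => (1:ℝ)) (Y m ω)) / (M : ℝ)) := by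
      funext M
      rw [hphat M ω]
      ring
    rw [heq]
    have ht := (h3.const_mul (1 / A)).const_sub 1
    have hval : pstar = 1 - 1 / A * (p * B + (1 - p) * A) := by
      rw [hpstardef]; ring
    rw [hval]
    exact ht
  have hS2_t : Filter.Tendsto (fun M : ℕ => S2 M ω) Filter.atTop
      (nhds ((l ^ 4 * θ ^ 2 * p + l ^ 2) - (l ^ 2 * θ * p) ^ 2)) := by
    have hid : (fun M : ℕ => S2 M ω) = fun M : ℕ => ((M:ℝ) / ((M:ℝ) - 1)) *
        ((∑ m ∈ Finset.range M, (Y m ω) ^ 2) / (M : ℝ)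
          - ((∑ m ∈ Finset.range M, Y m ω) / (M : ℝ)) ^ 2) := by
      funext M
      rw [hS2 M ω]
      have hsum : ∑ m ∈ Finset.range M, (Y m ω - Ybar M ω) ^ 2
          = ∑ m ∈ Finset.range M, (Y m ω) ^ 2
            - (2 * Ybar M ω) * ∑ m ∈ Finset.range M, Y m ω
            + (M:ℝ) * (Ybar M ω) ^ 2 := by
        rw [Finset.sum_congr rfl (fun m _ => (by ring :
          (Y m ω - Ybar M ω) ^ 2
            = (Y m ω) ^ 2 - (2 * Ybar M ω) * Y m ω + (Ybar M ω) ^ 2)),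
          Finset.sum_add_distrib, Finset.sum_sub_distrib, ← Finset.mul_sum,
          Finset.sum_const, Finset.card_range, nsmul_eq_mul]
      rw [hsum, hYbar M ω]
      rcases Nat.lt_or_ge M 2 with hM | hM
      · interval_cases M <;> norm_num
      · have hM0 : (M:ℝ) ≠ 0 := Nat.cast_ne_zero.mpr (by omega)
        have hM1 : (M:ℝ) - 1 ≠ 0 := by
          have : (2:ℝ) ≤ (M:ℝ) := by exact_mod_cast hM
          linarith
        field_simp
        ring
    rw [hid]
    have hmul := hratio.mul (h2.sub (h1.pow 2))
    rw [one_mul] at hmul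
    exact hmul
  have hfrac : Filter.Tendsto (fun M : ℕ =>
      (S2 M ω - l ^ 2 - Ybar M ω ^ 2 * (1 - phat M ω) / phat M ω) /
        (phat M ω * l ^ 4)) Filter.atTop
      (nhds ((((l ^ 4 * θ ^ 2 * p + l ^ 2) - (l ^ 2 * θ * p) ^ 2) - l ^ 2
        - (l ^ 2 * θ * p) ^ 2 * (1 - pstar) / pstar) / (pstar * l ^ 4))) := by
    apply Filter.Tendsto.div
    · exact (hS2_t.sub tendsto_const_nhds).sub
        (((hYbar_t.pow 2).mul (tendsto_const_nhds.sub hphat_t)).div hphat_t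
          hpstar_pos.ne')
    · exact hphat_t.mul tendsto_const_nhds
    · exact (mul_pos hpstar_pos (show (0:ℝ) < l ^ 4 by positivity)).ne'
  have htau_t : Filter.Tendsto (fun M : ℕ => tauhat2 M ω) Filter.atTop (nhds 0) := by
    have heq : (fun M : ℕ => tauhat2 M ω) = fun M : ℕ =>
        max ((S2 M ω - l ^ 2 - Ybar M ω ^ 2 * (1 - phat M ω) / phat M ω) /
          (phat M ω * l ^ 4)) 0 := funext fun M => htauhat2 M ω
    rw [heq]
    have hmax := hfrac.max (tendsto_const_nhds (x := (0:ℝ)) (f := Filter.atTop (α := ℕ)))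
    rwa [max_eq_right (div_nonpos_of_nonpos_of_nonneg hNL
      (mul_pos hpstar_pos (show (0:ℝ) < l ^ 4 by positivity)).le)] at hmax
  exact htau_t
end
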